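/- arXiv:1402.4231 — 2 statements merged into one kernel-verified Lean document; each statement's English description precedes it below -/
import Mathlib

section
/- Let K₁ and K₂ be triangulated closed surfaces on disjoint vertex sets V₁ and V₂, centrally symmetric under involutions σ₁ and σ₂ respectively. For t = 1, 2 suppose F_t is a triangle of K_t with image F_t' = σ_t(F_t), such that no edge of K_t joins a vertex of F_t to a vertex of F_t' (in particular F_t and F_t' are disjoint). Let φ : F₁ → F₂ be any bijection and let ψ : F₁' → F₂' be the bijection ψ = σ₂ ∘ φ ∘ σ₁. Form the complex K on the quotient vertex set (V₁ ∪ V₂)/(x ∼ φ(x) for x ∈ F₁, y ∼ ψ(y) for y ∈ F₁'), whose triangles are all triangles of K₁ other than F₁, F₁' together with all triangles of K₂ other than F₂, F₂' (vertices taken in the quotient). Then K is a triangulated closed surface, K is centrally symmetric under the involution induced by σ₁ and σ₂ (which agree on identified vertices), and χ(K) = χ(K₁) + χ(K₂) − 4. -/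
/-- A simple graph is a single cycle iff it is connected and 2-regular. -/
def IsSingleCycle {α : Type*} (G : SimpleGraph α) : Prop :=
  G.Connected ∧ ∀ a : α, (G.neighborSet a).ncard = 2

section Tri

variable {V : Type*} [DecidableEq V]

/-- The edges of a family of simplices: the 2-element subsets of its members. -/
def triEdges (K : Finset (Finset V)) : Finset (Finset V) :=
  K.biUnion fun T => T.powersetCard 2

/-- The underlying graph of a family of simplices. -/
def cplxGraph (K : Finset (Finset V)) : SimpleGraph V where
  Adj a b := a ≠ b ∧ ∃ T ∈ K, a ∈ T ∧ b ∈ T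
  symm := by
    refine ⟨?_⟩
    rintro a b ⟨h, T, hT, ha, hb⟩
    exact ⟨h.symm, T, hT, hb, ha⟩
  loopless := ⟨fun a h => h.1 rfl⟩

/-- The link graph of a vertex `v`: `a,b` are joined iff `{v,a,b}` is a simplex. -/
def linkGraph (K : Finset (Finset V)) (v : V) : SimpleGraph V where
  Adj a b := a ≠ b ∧ a ≠ v ∧ b ≠ v ∧ ({v, a, b} : Finset V) ∈ K
  symm := by
    refine ⟨?_⟩
    rintro a b ⟨h1, h2, h3, h4⟩
    refine ⟨h1.symm, h3, h2, ?_⟩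
    rwa [Finset.pair_comm b a]
  loopless := ⟨fun a h => h.1 rfl⟩

/-- Euler characteristic of a triangle family on vertex set `W`. -/
def eulerCharOn (W : Finset V) (K : Finset (Finset V)) : ℤ :=
  (W.card : ℤ) - ((triEdges K).card : ℤ) + (K.card : ℤ)

/-- `K` is a triangulated closed surface on the vertex set `W`. -/
def IsTriSurfaceOn (W : Finset V) (K : Finset (Finset V)) : Prop :=
  (∀ T ∈ K, T.card = 3 ∧ T ⊆ W) ∧
  ((cplxGraph K).induce (W : Set V)).Connected ∧
  (∀ e ∈ triEdges K, (K.filter fun T => e ⊆ T).card = 2) ∧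
  (∀ v ∈ W, IsSingleCycle ((linkGraph K v).induce ((cplxGraph K).neighborSet v)))

/-- `K` is centrally symmetric on vertex set `W` under the involution `σ`. -/
def IsCSOn (W : Finset V) (K : Finset (Finset V)) (σ : V → V) : Prop :=
  Set.MapsTo σ (W : Set V) (W : Set V) ∧
  (∀ v ∈ W, σ (σ v) = v) ∧
  (∀ T ∈ K, T.image σ ∈ K) ∧
  (∀ v ∈ W, σ v ≠ v) ∧
  (∀ e ∈ triEdges K, e.image σ ≠ e) ∧
  (∀ T ∈ K, T.image σ ≠ T)

/-- Orientability of a triangulated surface. -/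
def IsOrientableTri (K : Finset (Finset V)) : Prop :=
  ∃ ori : Finset V → V → V → Bool,
    (∀ T ∈ K, ∀ a ∈ T, ∀ b ∈ T, a ≠ b → ori T a b = !ori T b a) ∧
    (∀ T ∈ K, ∀ a b c : V, a ≠ b → b ≠ c → a ≠ c → T = {a, b, c} → ori T a b = ori T b c) ∧
    (∀ T ∈ K, ∀ T' ∈ K, T ≠ T' → ∀ a b : V, a ≠ b → a ∈ T → b ∈ T → a ∈ T' → b ∈ T' →
      ori T a b = ori T' b a)

end Tri

/-- The identifications used to glue: a vertex `a ∈ F₁` is identified with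
`φ a ∈ F₂`, and a vertex `a ∈ σ₁(F₁)` is identified with `σ₂ (φ (σ₁ a))`
(i.e. `ψ = σ₂ ∘ φ ∘ σ₁`). -/
def Glue {V₁ V₂ : Type*} [DecidableEq V₁] [DecidableEq V₂]
    (σ₁ : V₁ → V₁) (σ₂ : V₂ → V₂) (F₁ : Finset V₁) (φ : V₁ → V₂)
    (x y : V₁ ⊕ V₂) : Prop :=
  ∃ a : V₁, x = Sum.inl a ∧
    ((a ∈ F₁ ∧ y = Sum.inr (φ a)) ∨
     (a ∈ F₁.image σ₁ ∧ y = Sum.inr (σ₂ (φ (σ₁ a)))))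

/-- The glued complex: all triangles of `K₁` other than `F₁, σ₁(F₁)` together
with all triangles of `K₂` other than `F₂, σ₂(F₂)`, with vertices taken in the
quotient vertex set via `q`. -/
def glueComplex {V₁ V₂ W : Type*} [DecidableEq V₁] [DecidableEq V₂] [DecidableEq W]
    (K₁ : Finset (Finset V₁)) (K₂ : Finset (Finset V₂)) (σ₁ : V₁ → V₁) (σ₂ : V₂ → V₂)
    (F₁ : Finset V₁) (F₂ : Finset V₂) (q : V₁ ⊕ V₂ → W) : Finset (Finset W) :=
  ((K₁.erase F₁).erase (F₁.image σ₁)).image (Finset.image (q ∘ Sum.inl)) ∪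
  ((K₂.erase F₂).erase (F₂.image σ₂)).image (Finset.image (q ∘ Sum.inr))


section AuxLemmas
variable {V : Type*} [DecidableEq V]

lemma mem_triEdges {K : Finset (Finset V)} {e : Finset V} :
    e ∈ triEdges K ↔ ∃ T ∈ K, e ⊆ T ∧ e.card = 2 := by
  simp [triEdges, Finset.mem_biUnion, Finset.mem_powersetCard]

lemma edge_mem {K : Finset (Finset V)} {T e : Finset V} (hT : T ∈ K) (he : e ⊆ T)
    (hc : e.card = 2) : e ∈ triEdges K :=
  mem_triEdges.2 ⟨T, hT, he, hc⟩

lemma pair_subset {T : Finset V} {a b : V} (ha : a ∈ T) (hb : b ∈ T) :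
    ({a, b} : Finset V) ⊆ T := by
  intro x hx
  rcases Finset.mem_insert.1 hx with h | h
  · exact h ▸ ha
  · exact (Finset.mem_singleton.1 h) ▸ hb

lemma pair_edge {K : Finset (Finset V)} {T : Finset V} {a b : V} (hT : T ∈ K)
    (ha : a ∈ T) (hb : b ∈ T) (hab : a ≠ b) : ({a, b} : Finset V) ∈ triEdges K :=
  edge_mem hT (pair_subset ha hb) (Finset.card_pair hab)

lemma triEdges_mono {K K' : Finset (Finset V)} (h : K ⊆ K') : triEdges K ⊆ triEdges K' := by
  intro e he
  obtain ⟨T, hT, h1, h2⟩ := mem_triEdges.1 he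
  exact edge_mem (h hT) h1 h2

lemma other_tri {K : Finset (Finset V)}
    (h2 : ∀ e ∈ triEdges K, (K.filter fun T => e ⊆ T).card = 2)
    {e R : Finset V} (he : e ∈ triEdges K) (hR : R ∈ K) (hsub : e ⊆ R) :
    ∃ T₁ ∈ K, e ⊆ T₁ ∧ T₁ ≠ R ∧ ∀ T ∈ K, e ⊆ T → T = R ∨ T = T₁ := by
  obtain ⟨P, Q, hPQ, hS⟩ := Finset.card_eq_two.1 (h2 e he)
  have hRmem : R ∈ K.filter fun T => e ⊆ T := Finset.mem_filter.2 ⟨hR, hsub⟩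
  have hPmem : P ∈ K.filter fun T => e ⊆ T := by rw [hS]; simp
  have hQmem : Q ∈ K.filter fun T => e ⊆ T := by rw [hS]; simp
  rw [hS] at hRmem
  have huniv : ∀ T ∈ K, e ⊆ T → T = P ∨ T = Q := by
    intro T hT hsubT
    have : T ∈ K.filter fun T => e ⊆ T := Finset.mem_filter.2 ⟨hT, hsubT⟩
    rw [hS] at this
    simpa using this
  rcases Finset.mem_insert.1 hRmem with h | h
  · refine ⟨Q, (Finset.mem_filter.1 hQmem).1, (Finset.mem_filter.1 hQmem).2,
      by rw [h]; exact hPQ.symm, ?_⟩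
    intro T hT hsubT
    rcases huniv T hT hsubT with h' | h'
    · exact Or.inl (h' ▸ h.symm ▸ rfl)
    · exact Or.inr h'
  · have h := Finset.mem_singleton.1 h
    refine ⟨P, (Finset.mem_filter.1 hPmem).1, (Finset.mem_filter.1 hPmem).2,
      by rw [h]; exact hPQ, ?_⟩
    intro T hT hsubT
    rcases huniv T hT hsubT with h' | h'
    · exact Or.inr h'
    · exact Or.inl (h' ▸ h.symm ▸ rfl)

end AuxLemmas

/-- Abstract setting for gluing two triangulated surfaces along a pair of triangles. -/
structure GS (X Y W : Type) [Fintype X] [DecidableEq X] [Fintype Y] [DecidableEq Y]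
    [Fintype W] [DecidableEq W] : Type where
  Kx : Finset (Finset X)
  Ky : Finset (Finset Y)
  Fx : Finset X
  Fx' : Finset X
  Fy : Finset Y
  Fy' : Finset Y
  jx : X → W
  jy : Y → W
  m : X → Y
  m' : X → Y
  hKx : IsTriSurfaceOn Finset.univ Kx
  hKy : IsTriSurfaceOn Finset.univ Ky
  hFx : Fx ∈ Kx
  hFx' : Fx' ∈ Kx
  hFy : Fy ∈ Ky
  hFy' : Fy' ∈ Ky
  hedgex : ∀ a ∈ Fx, ∀ b ∈ Fx', ({a, b} : Finset X) ∉ triEdges Kx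
  hedgey : ∀ a ∈ Fy, ∀ b ∈ Fy', ({a, b} : Finset Y) ∉ triEdges Ky
  hm : Set.BijOn m (Fx : Set X) (Fy : Set Y)
  hm' : Set.BijOn m' (Fx' : Set X) (Fy' : Set Y)
  hjx : Function.Injective jx
  hjy : Function.Injective jy
  hmix : ∀ a b, jx a = jy b ↔ (a ∈ Fx ∧ b = m a) ∨ (a ∈ Fx' ∧ b = m' a)
  hsurj : ∀ w : W, (∃ a, w = jx a) ∨ (∃ b, w = jy b)

namespace GS

variable {X Y W : Type} [Fintype X] [DecidableEq X] [Fintype Y] [DecidableEq Y]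
  [Fintype W] [DecidableEq W] (S : GS X Y W)

def Ax : Finset (Finset X) := (S.Kx.erase S.Fx).erase S.Fx'
def By : Finset (Finset Y) := (S.Ky.erase S.Fy).erase S.Fy'
def glued : Finset (Finset W) :=
  S.Ax.image (Finset.image S.jx) ∪ S.By.image (Finset.image S.jy)

lemma tri_card {T : Finset X} (h : T ∈ S.Kx) : T.card = 3 := (S.hKx.1 T h).1
lemma edge2x : ∀ e ∈ triEdges S.Kx, (S.Kx.filter fun T => e ⊆ T).card = 2 := S.hKx.2.2.1
lemma cardFx : S.Fx.card = 3 := S.tri_card S.hFx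
lemma cardFx' : S.Fx'.card = 3 := S.tri_card S.hFx'

lemma disjx : ∀ a ∈ S.Fx, a ∉ S.Fx' := by
  intro a ha ha'
  have h1 : (S.Fx.erase a).Nonempty := by
    rw [← Finset.card_pos, Finset.card_erase_of_mem ha, S.cardFx]
    norm_num
  obtain ⟨c, hc⟩ := h1
  have hca : c ≠ a := (Finset.mem_erase.1 hc).1
  have hcF : c ∈ S.Fx := (Finset.mem_erase.1 hc).2
  exact S.hedgex c hcF a ha' (pair_edge S.hFx hcF ha hca)

lemma mem_Ax {T : Finset X} : T ∈ S.Ax ↔ T ∈ S.Kx ∧ T ≠ S.Fx ∧ T ≠ S.Fx' := by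
  simp only [Ax, Finset.mem_erase]
  tauto

lemma mem_By {T : Finset Y} : T ∈ S.By ↔ T ∈ S.Ky ∧ T ≠ S.Fy ∧ T ≠ S.Fy' := by
  simp only [By, Finset.mem_erase]
  tauto

lemma Ax_subset : S.Ax ⊆ S.Kx := fun T hT => (S.mem_Ax.1 hT).1

lemma edge_pure {e : Finset X} (he : e ∈ triEdges S.Kx) (hsub : e ⊆ S.Fx ∪ S.Fx') :
    e ⊆ S.Fx ∨ e ⊆ S.Fx' := by
  obtain ⟨T, hT, hesub, hcard⟩ := mem_triEdges.1 he
  obtain ⟨a, b, hab, rfl⟩ := Finset.card_eq_two.1 hcard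
  have haU := hsub (Finset.mem_insert_self a {b})
  have hbU := hsub (Finset.mem_insert_of_mem (Finset.mem_singleton_self b))
  rcases Finset.mem_union.1 haU with ha | ha
  · rcases Finset.mem_union.1 hbU with hb | hb
    · left; exact pair_subset ha hb
    · exact absurd he (S.hedgex a ha b hb)
  · rcases Finset.mem_union.1 hbU with hb | hb
    · rw [Finset.pair_comm] at he ⊢
      exact absurd he (S.hedgex b hb a ha)
    · right; exact pair_subset ha hb

lemma tri_pure {T : Finset X} (hT : T ∈ S.Kx) (hsub : T ⊆ S.Fx ∪ S.Fx') :
    T = S.Fx ∨ T = S.Fx' := by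
  have hcard := S.tri_card hT
  have hne : T.Nonempty := by rw [← Finset.card_pos, hcard]; norm_num
  obtain ⟨a, ha⟩ := hne
  have hkey : T ⊆ S.Fx ∨ T ⊆ S.Fx' := by
    rcases Finset.mem_union.1 (hsub ha) with haF | haF
    · left
      intro b hb
      rcases Finset.mem_union.1 (hsub hb) with hbF | hbF
      · exact hbF
      · exfalso
        have hab : a ≠ b := fun h => S.disjx a haF (h ▸ hbF)
        exact S.hedgex a haF b hbF (pair_edge hT ha hb hab)
    · right
      intro b hb
      rcases Finset.mem_union.1 (hsub hb) with hbF | hbF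
      · exfalso
        have hba : b ≠ a := fun h => S.disjx b hbF (h ▸ haF)
        exact S.hedgex b hbF a haF (pair_edge hT hb ha hba)
      · exact hbF
  rcases hkey with h | h
  · exact Or.inl (Finset.eq_of_subset_of_card_le h (by rw [hcard, S.cardFx]))
  · exact Or.inr (Finset.eq_of_subset_of_card_le h (by rw [hcard, S.cardFx']))

lemma survive {e : Finset X} (he : e ∈ triEdges S.Kx) : ∃ T ∈ S.Ax, e ⊆ T := by
  obtain ⟨T, hT, hesub, hcard⟩ := mem_triEdges.1 he
  obtain ⟨T₁, hT₁K, hT₁sub, hT₁ne, huniq⟩ := other_tri S.edge2x he hT hesub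
  have hene : e.Nonempty := by rw [← Finset.card_pos, hcard]; norm_num
  obtain ⟨x, hx⟩ := hene
  by_cases h1 : T = S.Fx ∨ T = S.Fx'
  · by_cases h2 : T₁ = S.Fx ∨ T₁ = S.Fx'
    · exfalso
      -- then e ⊆ Fx and e ⊆ Fx'
      have : x ∈ S.Fx ∧ x ∈ S.Fx' := by
        rcases h1 with h1 | h1 <;> rcases h2 with h2 | h2
        · exact absurd (h2 ▸ h1 ▸ rfl : T = T₁) (fun h => hT₁ne h.symm)
        · exact ⟨h1 ▸ hesub hx, h2 ▸ hT₁sub hx⟩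
        · exact ⟨h2 ▸ hT₁sub hx, h1 ▸ hesub hx⟩
        · exact absurd (h2 ▸ h1 ▸ rfl : T = T₁) (fun h => hT₁ne h.symm)
      exact S.disjx x this.1 this.2
    · push_neg at h2
      exact ⟨T₁, S.mem_Ax.2 ⟨hT₁K, h2.1, h2.2⟩, hT₁sub⟩
  · push_neg at h1
    exact ⟨T, S.mem_Ax.2 ⟨hT, h1.1, h1.2⟩, hesub⟩

lemma triEdges_Ax : triEdges S.Ax = triEdges S.Kx := by
  apply Finset.Subset.antisymm (triEdges_mono S.Ax_subset)
  intro e he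
  obtain ⟨T, hT, hsub⟩ := S.survive he
  exact edge_mem hT hsub (mem_triEdges.1 he).choose_spec.2.2

lemma jx_mem_image {a : X} {T₂ : Finset Y} :
    S.jx a ∈ T₂.image S.jy ↔ (a ∈ S.Fx ∧ S.m a ∈ T₂) ∨ (a ∈ S.Fx' ∧ S.m' a ∈ T₂) := by
  rw [Finset.mem_image]
  constructor
  · rintro ⟨b, hbT, hb⟩
    rcases (S.hmix a b).1 hb.symm with ⟨h1, rfl⟩ | ⟨h1, rfl⟩
    · exact Or.inl ⟨h1, hbT⟩
    · exact Or.inr ⟨h1, hbT⟩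
  · rintro (⟨h1, h2⟩ | ⟨h1, h2⟩)
    · exact ⟨S.m a, h2, ((S.hmix a (S.m a)).2 (Or.inl ⟨h1, rfl⟩)).symm⟩
    · exact ⟨S.m' a, h2, ((S.hmix a (S.m' a)).2 (Or.inr ⟨h1, rfl⟩)).symm⟩

lemma img_sub {T₁ : Finset X} {T₂ : Finset Y} (h : T₁.image S.jx ⊆ T₂.image S.jy) :
    T₁ ⊆ S.Fx ∪ S.Fx' := by
  intro a ha
  have : S.jx a ∈ T₂.image S.jy := h (Finset.mem_image_of_mem _ ha)
  rcases S.jx_mem_image.1 this with ⟨h1, -⟩ | ⟨h1, -⟩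
  · exact Finset.mem_union_left _ h1
  · exact Finset.mem_union_right _ h1

lemma img_ne {T₁ : Finset X} {T₂ : Finset Y} (hT₁ : T₁ ∈ S.Ax) :
    T₁.image S.jx ≠ T₂.image S.jy := by
  intro heq
  have hsub := S.img_sub (Finset.le_iff_subset.1 heq.le)
  rcases S.tri_pure (S.mem_Ax.1 hT₁).1 hsub with h | h
  · exact (S.mem_Ax.1 hT₁).2.1 h
  · exact (S.mem_Ax.1 hT₁).2.2 h

lemma mem_glued {SS : Finset W} :
    SS ∈ S.glued ↔ (∃ T ∈ S.Ax, SS = T.image S.jx) ∨ (∃ T ∈ S.By, SS = T.image S.jy) := by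
  simp only [glued, Finset.mem_union, Finset.mem_image]
  constructor
  · rintro (⟨T, hT, rfl⟩ | ⟨T, hT, rfl⟩)
    · exact Or.inl ⟨T, hT, rfl⟩
    · exact Or.inr ⟨T, hT, rfl⟩
  · rintro (⟨T, hT, rfl⟩ | ⟨T, hT, rfl⟩)
    · exact Or.inl ⟨T, hT, rfl⟩
    · exact Or.inr ⟨T, hT, rfl⟩

/-- Exchange the roles of the two removed triangles on each side. -/
def flip : GS X Y W where
  Kx := S.Kx
  Ky := S.Ky
  Fx := S.Fx'
  Fx' := S.Fx
  Fy := S.Fy'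
  Fy' := S.Fy
  jx := S.jx
  jy := S.jy
  m := S.m'
  m' := S.m
  hKx := S.hKx
  hKy := S.hKy
  hFx := S.hFx'
  hFx' := S.hFx
  hFy := S.hFy'
  hFy' := S.hFy
  hedgex := by
    intro a ha b hb h
    rw [Finset.pair_comm] at h
    exact S.hedgex b hb a ha h
  hedgey := by
    intro a ha b hb h
    rw [Finset.pair_comm] at h
    exact S.hedgey b hb a ha h
  hm := S.hm'
  hm' := S.hm
  hjx := S.hjx
  hjy := S.hjy
  hmix := fun a b => (S.hmix a b).trans or_comm
  hsurj := S.hsurj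

lemma flip_glued : S.flip.glued = S.glued := by
  have h1 : S.flip.Ax = S.Ax := Finset.erase_right_comm
  have h2 : S.flip.By = S.By := Finset.erase_right_comm
  simp only [glued, h1, h2]
  rfl

/-- Exchange the two sides. -/
noncomputable def swap : GS Y X W :=
  haveI : Nonempty X := by
    have : S.Fx.Nonempty := by rw [← Finset.card_pos, S.cardFx]; norm_num
    exact ⟨this.choose⟩
  { Kx := S.Ky
    Ky := S.Kx
    Fx := S.Fy
    Fx' := S.Fy'
    Fy := S.Fx
    Fy' := S.Fx'
    jx := S.jy
    jy := S.jx
    m := Function.invFunOn S.m (S.Fx : Set X)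
    m' := Function.invFunOn S.m' (S.Fx' : Set X)
    hKx := S.hKy
    hKy := S.hKx
    hFx := S.hFy
    hFx' := S.hFy'
    hFy := S.hFx
    hFy' := S.hFx'
    hedgex := S.hedgey
    hedgey := S.hedgex
    hm := Set.BijOn.symm (S.hm.invOn_invFunOn).symm S.hm
    hm' := Set.BijOn.symm (S.hm'.invOn_invFunOn).symm S.hm'
    hjx := S.hjy
    hjy := S.hjx
    hmix := by
      intro b a
      rw [eq_comm, S.hmix]
      constructor
      · rintro (⟨ha, rfl⟩ | ⟨ha, rfl⟩)
        · exact Or.inl ⟨S.hm.mapsTo ha, ((S.hm.invOn_invFunOn).1 ha).symm⟩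
        · exact Or.inr ⟨S.hm'.mapsTo ha, ((S.hm'.invOn_invFunOn).1 ha).symm⟩
      · rintro (⟨hb, rfl⟩ | ⟨hb, rfl⟩)
        · exact Or.inl ⟨(Set.BijOn.symm (S.hm.invOn_invFunOn).symm S.hm).mapsTo hb,
            ((S.hm.invOn_invFunOn).2 hb).symm⟩
        · exact Or.inr ⟨(Set.BijOn.symm (S.hm'.invOn_invFunOn).symm S.hm').mapsTo hb,
            ((S.hm'.invOn_invFunOn).2 hb).symm⟩
    hsurj := fun w => (S.hsurj w).symm }

lemma swap_glued : S.swap.glued = S.glued := by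
  have h1 : S.swap.Ax = S.By := rfl
  have h2 : S.swap.By = S.Ax := rfl
  simp only [glued, h1, h2]
  exact Finset.union_comm _ _

end GS

namespace GS

variable {X Y W : Type} [Fintype X] [DecidableEq X] [Fintype Y] [DecidableEq Y]
  [Fintype W] [DecidableEq W] (S : GS X Y W)

example : S.swap.jx = S.jy := rfl
example : S.flip.jx = S.jx := rfl
example : S.flip.Fx = S.Fx' := rfl

lemma glued_card3 : ∀ T ∈ S.glued, T.card = 3 := by
  intro T hT
  rcases S.mem_glued.1 hT with ⟨T₁, hT₁, rfl⟩ | ⟨T₂, hT₂, rfl⟩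
  · rw [Finset.card_image_of_injective _ S.hjx]
    exact S.tri_card (S.Ax_subset hT₁)
  · rw [Finset.card_image_of_injective _ S.hjy]
    exact S.swap.tri_card (S.swap.Ax_subset hT₂)

lemma push_edge {e₁ : Finset X} (he : e₁ ∈ triEdges S.Kx) :
    e₁.image S.jx ∈ triEdges S.glued := by
  obtain ⟨T, hT, hsub⟩ := S.survive he
  refine edge_mem (S.mem_glued.2 (Or.inl ⟨T, hT, rfl⟩)) (Finset.image_subset_image hsub) ?_
  rw [Finset.card_image_of_injective _ S.hjx]
  exact (mem_triEdges.1 he).choose_spec.2.2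

lemma edge_decomp {e : Finset W} (he : e ∈ triEdges S.glued) :
    (∃ e₁ ∈ triEdges S.Kx, e = e₁.image S.jx) ∨
    (∃ e₂ ∈ triEdges S.Ky, e = e₂.image S.jy) := by
  obtain ⟨T, hT, hsub, hcard⟩ := mem_triEdges.1 he
  rcases S.mem_glued.1 hT with ⟨T₁, hT₁, rfl⟩ | ⟨T₂, hT₂, rfl⟩
  · left
    obtain ⟨e₁, he₁sub, he₁eq⟩ := Finset.subset_image_iff.1 hsub
    have hc : e₁.card = 2 := by
      rw [← Finset.card_image_of_injective e₁ S.hjx, he₁eq, hcard]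
    exact ⟨e₁, edge_mem (S.Ax_subset hT₁) he₁sub hc, he₁eq.symm⟩
  · right
    obtain ⟨e₂, he₂sub, he₂eq⟩ := Finset.subset_image_iff.1 hsub
    have hc : e₂.card = 2 := by
      rw [← Finset.card_image_of_injective e₂ S.hjy, he₂eq, hcard]
    exact ⟨e₂, edge_mem (S.swap.Ax_subset hT₂) he₂sub hc, he₂eq.symm⟩

lemma image_eq_on_Fx {e₀ : Finset X} (h : e₀ ⊆ S.Fx) :
    e₀.image S.jx = (e₀.image S.m).image S.jy := by
  rw [Finset.image_image]
  apply Finset.image_congr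
  intro x hx
  exact (S.hmix x (S.m x)).2 (Or.inl ⟨h hx, rfl⟩)

lemma m_card {e₀ : Finset X} (h : e₀ ⊆ S.Fx) : (e₀.image S.m).card = e₀.card :=
  Finset.card_image_of_injOn (S.hm.injOn.mono (Finset.coe_subset.2 h))

lemma m_sub {e₀ : Finset X} (h : e₀ ⊆ S.Fx) : e₀.image S.m ⊆ S.Fy := by
  intro y hy
  obtain ⟨x, hx, rfl⟩ := Finset.mem_image.1 hy
  exact S.hm.mapsTo (h hx)

lemma filter_pure {e₁ : Finset X} (he₁ : e₁ ⊆ S.Fx) (hc : e₁.card = 2) :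
    (S.glued.filter fun T => (e₁.image S.jx) ⊆ T).card = 2 := by
  have he₁ne : e₁.Nonempty := by rw [← Finset.card_pos, hc]; norm_num
  have he₁K : e₁ ∈ triEdges S.Kx := edge_mem S.hFx he₁ hc
  obtain ⟨T₁, hT₁K, hT₁sub, hT₁ne, hT₁uniq⟩ := other_tri S.edge2x he₁K S.hFx he₁
  have hT₁Ax : T₁ ∈ S.Ax := by
    refine S.mem_Ax.2 ⟨hT₁K, hT₁ne, ?_⟩
    intro h
    obtain ⟨x, hx⟩ := he₁ne
    exact S.disjx x (he₁ hx) (h ▸ hT₁sub hx)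
  set e₂ := e₁.image S.m with he₂def
  have he₂sub : e₂ ⊆ S.Fy := S.m_sub he₁
  have he₂c : e₂.card = 2 := by rw [he₂def, S.m_card he₁, hc]
  have he₂K : e₂ ∈ triEdges S.Ky := edge_mem S.hFy he₂sub he₂c
  obtain ⟨T₂, hT₂K, hT₂sub, hT₂ne, hT₂uniq⟩ := other_tri S.swap.edge2x he₂K S.hFy he₂sub
  have hT₂By : T₂ ∈ S.By := by
    refine S.swap.mem_Ax.2 ⟨hT₂K, hT₂ne, ?_⟩
    intro h
    obtain ⟨y, hy⟩ := Finset.card_pos.1 (by rw [he₂c]; norm_num : 0 < e₂.card)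
    exact S.swap.disjx y (he₂sub hy) (h ▸ hT₂sub hy)
  have heq : e₁.image S.jx = e₂.image S.jy := S.image_eq_on_Fx he₁
  have hfilter : S.glued.filter (fun T => (e₁.image S.jx) ⊆ T)
      = {T₁.image S.jx, T₂.image S.jy} := by
    ext SS
    rw [Finset.mem_filter]
    constructor
    · rintro ⟨hSS, hsub⟩
      rcases S.mem_glued.1 hSS with ⟨T, hT, rfl⟩ | ⟨T, hT, rfl⟩
      · have hTe : e₁ ⊆ T := (Finset.image_subset_image_iff S.hjx).1 hsub
        rcases hT₁uniq T (S.Ax_subset hT) hTe with h | h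
        · exact absurd h (S.mem_Ax.1 hT).2.1
        · simp [h]
      · rw [heq] at hsub
        have hTe : e₂ ⊆ T := (Finset.image_subset_image_iff S.hjy).1 hsub
        rcases hT₂uniq T (S.swap.Ax_subset hT) hTe with h | h
        · exact absurd h (S.swap.mem_Ax.1 hT).2.1
        · simp [h]
    · intro h
      rcases Finset.mem_insert.1 h with h | h
      · subst h
        exact ⟨S.mem_glued.2 (Or.inl ⟨T₁, hT₁Ax, rfl⟩), Finset.image_subset_image hT₁sub⟩
      · rw [Finset.mem_singleton.1 h]
        refine ⟨S.mem_glued.2 (Or.inr ⟨T₂, hT₂By, rfl⟩), ?_⟩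
        rw [heq]
        exact Finset.image_subset_image hT₂sub
  rw [hfilter]
  exact Finset.card_pair (S.img_ne hT₁Ax)

lemma filter_x {e₁ : Finset X} (he₁ : e₁ ∈ triEdges S.Kx) :
    (S.glued.filter fun T => (e₁.image S.jx) ⊆ T).card = 2 := by
  have hc : e₁.card = 2 := (mem_triEdges.1 he₁).choose_spec.2.2
  by_cases hsub : e₁ ⊆ S.Fx ∪ S.Fx'
  · rcases S.edge_pure he₁ hsub with h | h
    · exact S.filter_pure h hc
    · rw [← S.flip_glued]
      exact S.flip.filter_pure h hc
  · -- impure case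
    have hx₀ : ∃ x ∈ e₁, x ∉ S.Fx ∪ S.Fx' := by
      by_contra hcon
      push_neg at hcon
      exact hsub hcon
    obtain ⟨x₀, hx₀e, hx₀F⟩ := hx₀
    obtain ⟨P, Q, hPQ, hS⟩ := Finset.card_eq_two.1 (S.edge2x e₁ he₁)
    have hPmem : P ∈ S.Kx.filter fun T => e₁ ⊆ T := by rw [hS]; simp
    have hQmem : Q ∈ S.Kx.filter fun T => e₁ ⊆ T := by rw [hS]; simp
    have hAx : ∀ T ∈ S.Kx.filter (fun T => e₁ ⊆ T), T ∈ S.Ax := by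
      intro T hT
      obtain ⟨hTK, hTe⟩ := Finset.mem_filter.1 hT
      refine S.mem_Ax.2 ⟨hTK, ?_, ?_⟩
      · intro h
        exact hx₀F (Finset.mem_union_left _ (h ▸ hTe hx₀e))
      · intro h
        exact hx₀F (Finset.mem_union_right _ (h ▸ hTe hx₀e))
    have hfilter : S.glued.filter (fun T => (e₁.image S.jx) ⊆ T)
        = {P.image S.jx, Q.image S.jx} := by
      ext SS
      rw [Finset.mem_filter]
      constructor
      · rintro ⟨hSS, hsub'⟩
        rcases S.mem_glued.1 hSS with ⟨T, hT, rfl⟩ | ⟨T, hT, rfl⟩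
        · have hTe : e₁ ⊆ T := (Finset.image_subset_image_iff S.hjx).1 hsub'
          have : T ∈ S.Kx.filter fun T => e₁ ⊆ T :=
            Finset.mem_filter.2 ⟨S.Ax_subset hT, hTe⟩
          rw [hS] at this
          rcases Finset.mem_insert.1 this with h | h
          · simp [h]
          · simp [Finset.mem_singleton.1 h]
        · exfalso
          have : S.jx x₀ ∈ T.image S.jy :=
            hsub' (Finset.mem_image_of_mem _ hx₀e)
          rcases S.jx_mem_image.1 this with ⟨h1, -⟩ | ⟨h1, -⟩
          · exact hx₀F (Finset.mem_union_left _ h1)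
          · exact hx₀F (Finset.mem_union_right _ h1)
      · intro h
        rcases Finset.mem_insert.1 h with h | h
        · subst h
          exact ⟨S.mem_glued.2 (Or.inl ⟨P, hAx P hPmem, rfl⟩),
            Finset.image_subset_image (Finset.mem_filter.1 hPmem).2⟩
        · rw [Finset.mem_singleton.1 h]
          exact ⟨S.mem_glued.2 (Or.inl ⟨Q, hAx Q hQmem, rfl⟩),
            Finset.image_subset_image (Finset.mem_filter.1 hQmem).2⟩
    rw [hfilter]
    exact Finset.card_pair (fun h => hPQ (Finset.image_injective S.hjx h))

lemma glued_edges_two : ∀ e ∈ triEdges S.glued,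
    (S.glued.filter fun T => e ⊆ T).card = 2 := by
  intro e he
  rcases S.edge_decomp he with ⟨e₁, he₁, rfl⟩ | ⟨e₂, he₂, rfl⟩
  · exact S.filter_x he₁
  · rw [← S.swap_glued]
    exact S.swap.filter_x he₂

end GS

section Aux3
variable {V : Type*} [DecidableEq V]

/-- The "third vertex" of a triangle containing a given pair. -/
lemma third_vertex {T : Finset V} {v x : V} (h3 : T.card = 3) (hv : v ∈ T) (hx : x ∈ T)
    (hvx : v ≠ x) : ∃ y, y ≠ v ∧ y ≠ x ∧ T = {v, x, y} := by
  have hsub : ({v, x} : Finset V) ⊆ T := by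
    intro z hz; rcases Finset.mem_insert.1 hz with h | h
    · exact h ▸ hv
    · exact (Finset.mem_singleton.1 h) ▸ hx
  have hcard : (T \ ({v, x} : Finset V)).card = 1 := by
    rw [Finset.card_sdiff_of_subset hsub, h3, Finset.card_pair hvx]
  obtain ⟨y, hy⟩ := Finset.card_eq_one.1 hcard
  have hyy : y ∈ T \ ({v, x} : Finset V) := hy ▸ Finset.mem_singleton_self y
  have hyv : y ≠ v := by
    intro h; exact (Finset.mem_sdiff.1 hyy).2 (by simp [h])
  have hyx : y ≠ x := by
    intro h; exact (Finset.mem_sdiff.1 hyy).2 (by simp [h])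
  refine ⟨y, hyv, hyx, ?_⟩
  have := Finset.union_sdiff_of_subset hsub
  rw [hy] at this
  rw [← this]
  ext z; simp [or_assoc]

/-- In a complex where each triangle has 3 vertices and each edge is in exactly two
triangles, the induced link graph at any vertex is 2-regular. -/
lemma link_two_regular {K : Finset (Finset V)} (h3 : ∀ T ∈ K, T.card = 3)
    (h2 : ∀ e ∈ triEdges K, (K.filter fun T => e ⊆ T).card = 2)
    (v : V) (x : ↥((cplxGraph K).neighborSet v)) :
    (((linkGraph K v).induce ((cplxGraph K).neighborSet v)).neighborSet x).ncard = 2 := by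
  classical
  obtain ⟨x, hx⟩ := x
  obtain ⟨hne, T, hT, hvT, hxT⟩ := hx
  have hepair : ({v, x} : Finset V) ∈ triEdges K := pair_edge hT hvT hxT hne
  have hS := h2 _ hepair
  obtain ⟨T₁, T₂, hT12, hSeq⟩ := Finset.card_eq_two.1 hS
  have hT₁mem : T₁ ∈ K.filter fun T => ({v, x} : Finset V) ⊆ T := by rw [hSeq]; simp
  have hT₂mem : T₂ ∈ K.filter fun T => ({v, x} : Finset V) ⊆ T := by rw [hSeq]; simp
  have hT₁K : T₁ ∈ K := (Finset.mem_filter.1 hT₁mem).1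
  have hT₂K : T₂ ∈ K := (Finset.mem_filter.1 hT₂mem).1
  have hT₁sub : ({v, x} : Finset V) ⊆ T₁ := (Finset.mem_filter.1 hT₁mem).2
  have hT₂sub : ({v, x} : Finset V) ⊆ T₂ := (Finset.mem_filter.1 hT₂mem).2
  obtain ⟨y₁, hy₁v, hy₁x, hT₁eq⟩ := third_vertex (h3 _ hT₁K)
    (hT₁sub (by simp)) (hT₁sub (by simp)) hne
  obtain ⟨y₂, hy₂v, hy₂x, hT₂eq⟩ := third_vertex (h3 _ hT₂K)
    (hT₂sub (by simp)) (hT₂sub (by simp)) hne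
  have hy12 : y₁ ≠ y₂ := by
    intro h; exact hT12 (by rw [hT₁eq, hT₂eq, h])
  have hy₁nb : y₁ ∈ (cplxGraph K).neighborSet v :=
    ⟨hy₁v.symm, T₁, hT₁K, hT₁sub (by simp), by rw [hT₁eq]; simp⟩
  have hy₂nb : y₂ ∈ (cplxGraph K).neighborSet v :=
    ⟨hy₂v.symm, T₂, hT₂K, hT₂sub (by simp), by rw [hT₂eq]; simp⟩
  have hxv : x ≠ v := hne.symm
  have hset : (((linkGraph K v).induce ((cplxGraph K).neighborSet v)).neighborSet
      ⟨x, ⟨hne, T, hT, hvT, hxT⟩⟩) = {⟨y₁, hy₁nb⟩, ⟨y₂, hy₂nb⟩} := by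
    ext ⟨z, hz⟩
    simp only [SimpleGraph.mem_neighborSet, Set.mem_insert_iff, Set.mem_singleton_iff]
    constructor
    · intro hadj
      have hadj' : (linkGraph K v).Adj x z := hadj
      obtain ⟨hxz, _, hzv, hmem⟩ := hadj'
      have : ({v, x, z} : Finset V) ∈ K.filter fun T => ({v, x} : Finset V) ⊆ T := by
        refine Finset.mem_filter.2 ⟨hmem, ?_⟩
        intro w hw; rcases Finset.mem_insert.1 hw with h | h
        · simp [h]
        · simp [Finset.mem_singleton.1 h]
      rw [hSeq] at this
      rcases Finset.mem_insert.1 this with h | h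
      · left
        have hzT₁ : z ∈ T₁ := by rw [← h]; simp
        rw [hT₁eq] at hzT₁
        have : z = y₁ := by
          rcases Finset.mem_insert.1 hzT₁ with h' | h'
          · exact absurd h' hzv
          · rcases Finset.mem_insert.1 h' with h'' | h''
            · exact absurd h'' (by exact fun hh => hxz hh.symm)
            · exact Finset.mem_singleton.1 h''
        exact Subtype.ext this
      · right
        have hzT₂ : z ∈ T₂ := by rw [← Finset.mem_singleton.1 h]; simp
        rw [hT₂eq] at hzT₂
        have : z = y₂ := by
          rcases Finset.mem_insert.1 hzT₂ with h' | h'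
          · exact absurd h' hzv
          · rcases Finset.mem_insert.1 h' with h'' | h''
            · exact absurd h'' (by exact fun hh => hxz hh.symm)
            · exact Finset.mem_singleton.1 h''
        exact Subtype.ext this
    · intro h
      rcases h with h | h
      · have hzval : z = y₁ := congrArg Subtype.val h
        subst hzval
        exact show (linkGraph K v).Adj x z from
          ⟨fun hh => hy₁x hh.symm, hxv, hy₁v, by rw [← hT₁eq]; exact hT₁K⟩
      · have hzval : z = y₂ := congrArg Subtype.val h
        subst hzval
        exact show (linkGraph K v).Adj x z from
          ⟨fun hh => hy₂x hh.symm, hxv, hy₂v, by rw [← hT₂eq]; exact hT₂K⟩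
  rw [hset]
  exact Set.ncard_pair (by intro h; exact hy12 (congrArg Subtype.val h))


end Aux3

lemma cycle_delete_connected {α : Type*} [Finite α] {G : SimpleGraph α}
    (h : IsSingleCycle G) {u v : α} (huv : G.Adj u v) :
    (G.deleteEdges {s(u, v)}).Connected := by
  classical
  haveI : Fintype α := Fintype.ofFinite _
  obtain ⟨hconn, hreg⟩ := h
  set G' := G.deleteEdges {s(u, v)} with hG'
  haveI : DecidableRel G'.Adj := Classical.decRel _
  have hadj' : ∀ x y : α, G'.Adj x y ↔ G.Adj x y ∧ ¬((x = u ∧ y = v) ∨ (x = v ∧ y = u)) := by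
    intro x y
    rw [hG', SimpleGraph.deleteEdges_adj]
    rw [Set.mem_singleton_iff, Sym2.eq_iff]
  have hre : G'.Reachable u v := by
    by_contra hnr
    set C : Set α := {x | G'.Reachable u x} with hC
    have huC : u ∈ C := SimpleGraph.Reachable.refl u
    have hvC : v ∉ C := hnr
    have hclosed : ∀ x ∈ C, ∀ y, G'.Adj x y → y ∈ C := fun x hx y hxy =>
      hx.trans hxy.reachable
    set H := G'.induce C with hH
    haveI : Fintype ↥C := Fintype.ofFinite _
    haveI : DecidableRel H.Adj := Classical.decRel _
    have hdegH : ∀ x : ↥C, H.degree x = (G'.neighborSet (x : α)).ncard := by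
      intro x
      rw [← SimpleGraph.card_neighborSet_eq_degree, Set.ncard_eq_toFinset_card',
        Set.toFinset_card]
      exact Fintype.card_congr
        (⟨fun y => ⟨y.1.1, y.2⟩, fun y => ⟨⟨y.1, hclosed _ x.2 _ y.2⟩, y.2⟩,
          fun y => rfl, fun y => rfl⟩ :
          ↥(H.neighborSet x) ≃ ↥(G'.neighborSet (x : α)))
    have hNu : G'.neighborSet u = G.neighborSet u \ {v} := by
      ext y
      constructor
      · intro hy
        obtain ⟨h1, h2⟩ := (hadj' u y).1 hy
        exact ⟨h1, fun hyv => h2 (Or.inl ⟨rfl, hyv⟩)⟩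
      · rintro ⟨h1, h2⟩
        refine (hadj' u y).2 ⟨h1, ?_⟩
        rintro (⟨-, h3⟩ | ⟨h3, -⟩)
        · exact h2 h3
        · exact G.irrefl (h3 ▸ huv)
    have hNother : ∀ x, x ≠ u → x ≠ v → G'.neighborSet x = G.neighborSet x := by
      intro x hxu hxv
      ext y
      constructor
      · exact fun hy => ((hadj' x y).1 hy).1
      · intro hy
        refine (hadj' x y).2 ⟨hy, ?_⟩
        rintro (⟨h1, -⟩ | ⟨h1, -⟩)
        · exact hxu h1
        · exact hxv h1
    have hcard_u : (G'.neighborSet u).ncard = 1 := by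
      rw [hNu, Set.ncard_diff_singleton_of_mem (show v ∈ G.neighborSet u from huv),
        hreg u]
    have hcard_other : ∀ x, x ≠ u → x ≠ v → (G'.neighborSet x).ncard = 2 := by
      intro x hxu hxv
      rw [hNother x hxu hxv]; exact hreg x
    have hsum := SimpleGraph.sum_degrees_eq_twice_card_edges H
    set u₀ : ↥C := ⟨u, huC⟩ with hu₀
    have hsplit : ∑ x : ↥C, H.degree x
        = ∑ x ∈ Finset.univ.erase u₀, H.degree x + H.degree u₀ :=
      (Finset.sum_erase_add _ _ (Finset.mem_univ u₀)).symm
    have hdeg_u₀ : H.degree u₀ = 1 := by rw [hdegH]; exact hcard_u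
    have hdeg_rest : ∀ x ∈ Finset.univ.erase u₀, H.degree x = 2 := by
      intro x hx
      have hxu : (x : α) ≠ u := by
        intro h
        exact (Finset.mem_erase.1 hx).1 (Subtype.ext h)
      have hxv : (x : α) ≠ v := fun h => hvC (h ▸ x.2)
      rw [hdegH]; exact hcard_other _ hxu hxv
    rw [hsplit, Finset.sum_congr rfl hdeg_rest, Finset.sum_const, smul_eq_mul,
      hdeg_u₀] at hsum
    omega
  have step : ∀ x y : α, G.Adj x y → G'.Reachable x y := by
    intro x y hxy
    by_cases hcase : (x = u ∧ y = v) ∨ (x = v ∧ y = u)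
    · rcases hcase with ⟨hx, hy⟩ | ⟨hx, hy⟩
      · exact hx ▸ hy ▸ hre
      · exact hx ▸ hy ▸ hre.symm
    · exact SimpleGraph.Adj.reachable ((hadj' x y).2 ⟨hxy, hcase⟩)
  have lift : ∀ x y : α, G.Reachable x y → G'.Reachable x y := by
    intro x y hxy
    obtain ⟨w⟩ := hxy
    induction w with
    | nil => exact SimpleGraph.Reachable.refl _
    | cons h p ih => exact (step _ _ h).trans ih
  haveI : Nonempty α := hconn.nonempty
  exact SimpleGraph.Connected.mk (fun x y => lift x y (hconn.preconnected x y))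

lemma conn_induce_univ {α : Type*} {G : SimpleGraph α} (h : G.Connected) :
    (G.induce (Set.univ : Set α)).Connected :=
  h.map ⟨fun a => ⟨a, Set.mem_univ a⟩, fun hadj => hadj⟩ (fun z => ⟨↑z, Subtype.ext rfl⟩)

lemma conn_of_induce_univ {α : Type*} {G : SimpleGraph α}
    (h : (G.induce (Set.univ : Set α)).Connected) : G.Connected :=
  h.map ⟨Subtype.val, fun hadj => hadj⟩ (fun a => ⟨⟨a, trivial⟩, rfl⟩)

namespace GS

variable {X Y W : Type} [Fintype X] [DecidableEq X] [Fintype Y] [DecidableEq Y]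
  [Fintype W] [DecidableEq W] (S : GS X Y W)

lemma adj_push {a x : X} (h : (cplxGraph S.Kx).Adj a x) :
    (cplxGraph S.glued).Adj (S.jx a) (S.jx x) := by
  obtain ⟨hne, T, hT, haT, hxT⟩ := h
  obtain ⟨T', hT', hsub⟩ := S.survive (pair_edge hT haT hxT hne)
  exact ⟨fun h => hne (S.hjx h), T'.image S.jx, S.mem_glued.2 (Or.inl ⟨T', hT', rfl⟩),
    Finset.mem_image_of_mem _ (hsub (Finset.mem_insert_self _ _)),
    Finset.mem_image_of_mem _ (hsub (Finset.mem_insert_of_mem (Finset.mem_singleton_self _)))⟩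

lemma cplx_conn_x : (cplxGraph S.Kx).Connected := by
  have h := S.hKx.2.1
  rw [Finset.coe_univ] at h
  exact conn_of_induce_univ h

lemma nbr_cases {a : X} {z : W} (hz : (cplxGraph S.glued).Adj (S.jx a) z) :
    (∃ x, z = S.jx x ∧ (cplxGraph S.Kx).Adj a x) ∨
    (a ∈ S.Fx ∧ ∃ y, z = S.jy y ∧ (cplxGraph S.Ky).Adj (S.m a) y) ∨
    (a ∈ S.Fx' ∧ ∃ y, z = S.jy y ∧ (cplxGraph S.Ky).Adj (S.m' a) y) := by
  obtain ⟨hne, SS, hSS, hwS, hzS⟩ := hz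
  rcases S.mem_glued.1 hSS with ⟨T, hT, rfl⟩ | ⟨T, hT, rfl⟩
  · left
    obtain ⟨t, htT, hteq⟩ := Finset.mem_image.1 hwS
    have hta : t = a := S.hjx hteq
    subst hta
    obtain ⟨x, hxT, hxeq⟩ := Finset.mem_image.1 hzS
    exact ⟨x, hxeq.symm,
      ⟨fun h => hne (by rw [h]; exact hxeq), T, S.Ax_subset hT, htT, hxT⟩⟩
  · right
    obtain ⟨y, hyT, hyeq⟩ := Finset.mem_image.1 hzS
    rcases S.jx_mem_image.1 hwS with ⟨h1, h2⟩ | ⟨h1, h2⟩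
    · left
      refine ⟨h1, y, hyeq.symm, ⟨?_, T, S.swap.Ax_subset hT, h2, hyT⟩⟩
      intro h
      exact hne (by rw [(S.hmix a (S.m a)).2 (Or.inl ⟨h1, rfl⟩), h, hyeq])
    · right
      refine ⟨h1, y, hyeq.symm, ⟨?_, T, S.swap.Ax_subset hT, h2, hyT⟩⟩
      intro h
      exact hne (by rw [(S.hmix a (S.m' a)).2 (Or.inr ⟨h1, rfl⟩), h, hyeq])

lemma link_adj_push {a x y : X} (h : (linkGraph S.Kx a).Adj x y)
    (hne1 : ({a, x, y} : Finset X) ≠ S.Fx) (hne2 : ({a, x, y} : Finset X) ≠ S.Fx') :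
    (linkGraph S.glued (S.jx a)).Adj (S.jx x) (S.jx y) := by
  obtain ⟨hxy, hxa, hya, hmem⟩ := h
  refine ⟨fun h => hxy (S.hjx h), fun h => hxa (S.hjx h), fun h => hya (S.hjx h), ?_⟩
  have himg : ({S.jx a, S.jx x, S.jx y} : Finset W) = ({a, x, y} : Finset X).image S.jx := by
    simp [Finset.image_insert]
  rw [himg]
  exact S.mem_glued.2 (Or.inl ⟨_, S.mem_Ax.2 ⟨hmem, hne1, hne2⟩, rfl⟩)

lemma link_conn_pure {a : X} (ha : a ∉ S.Fx) (ha' : a ∉ S.Fx') :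
    ((linkGraph S.glued (S.jx a)).induce
      ((cplxGraph S.glued).neighborSet (S.jx a))).Connected := by
  have hcyc := S.hKx.2.2.2 a (Finset.mem_univ a)
  have hmap : ∀ x : ↥((cplxGraph S.Kx).neighborSet a),
      S.jx ↑x ∈ (cplxGraph S.glued).neighborSet (S.jx a) := fun x => S.adj_push x.2
  refine SimpleGraph.Connected.map
    (⟨fun x => ⟨S.jx ↑x, hmap x⟩, ?_⟩ :
      (linkGraph S.Kx a).induce ((cplxGraph S.Kx).neighborSet a) →g
      (linkGraph S.glued (S.jx a)).induce
        ((cplxGraph S.glued).neighborSet (S.jx a))) ?_ hcyc.1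
  · rintro ⟨x, hx⟩ ⟨y, hy⟩ h
    have h' : (linkGraph S.Kx a).Adj x y := h
    have hne1 : ({a, x, y} : Finset X) ≠ S.Fx := fun hh =>
      ha (hh ▸ Finset.mem_insert_self a _)
    have hne2 : ({a, x, y} : Finset X) ≠ S.Fx' := fun hh =>
      ha' (hh ▸ Finset.mem_insert_self a _)
    exact S.link_adj_push h' hne1 hne2
  · rintro ⟨z, hz⟩
    rcases S.nbr_cases hz with ⟨x, rfl, hadj⟩ | ⟨h1, -⟩ | ⟨h1, -⟩
    · exact ⟨⟨x, hadj⟩, rfl⟩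
    · exact absurd h1 ha
    · exact absurd h1 ha'

lemma link_conn_glue {a : X} (ha : a ∈ S.Fx) :
    ((linkGraph S.glued (S.jx a)).induce
      ((cplxGraph S.glued).neighborSet (S.jx a))).Connected := by
  classical
  have h2 : (S.Fx.erase a).card = 2 := by rw [Finset.card_erase_of_mem ha, S.cardFx]
  obtain ⟨u, v, huv, herase⟩ := Finset.card_eq_two.1 h2
  have humem : u ∈ S.Fx.erase a := herase ▸ Finset.mem_insert_self u {v}
  have hvmem : v ∈ S.Fx.erase a :=
    herase ▸ Finset.mem_insert_of_mem (Finset.mem_singleton_self v)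
  have hu : u ∈ S.Fx := (Finset.mem_erase.1 humem).2
  have hv : v ∈ S.Fx := (Finset.mem_erase.1 hvmem).2
  have hua : u ≠ a := (Finset.mem_erase.1 humem).1
  have hva : v ≠ a := (Finset.mem_erase.1 hvmem).1
  have hFxeq : S.Fx = {a, u, v} := by rw [← Finset.insert_erase ha, herase]
  set b := S.m a with hbdef
  have hbF : b ∈ S.Fy := S.hm.mapsTo ha
  have hwb : S.jx a = S.jy b := (S.hmix a b).2 (Or.inl ⟨ha, rfl⟩)
  have hFyeq : S.Fy = {b, S.m u, S.m v} := by
    have himg : S.Fy = S.Fx.image S.m := by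
      apply Finset.coe_injective
      rw [Finset.coe_image]
      exact S.hm.image_eq.symm
    rw [himg, hFxeq]
    simp [Finset.image_insert, hbdef]
  have hmu_ne : S.m u ≠ S.m v := fun h => huv (S.hm.injOn hu hv h)
  have hbu : b ≠ S.m u := fun h => hua (S.hm.injOn hu ha h.symm)
  have hbv : b ≠ S.m v := fun h => hva (S.hm.injOn hv ha h.symm)
  have huN₁ : u ∈ (cplxGraph S.Kx).neighborSet a :=
    ⟨fun h => hua h.symm, S.Fx, S.hFx, ha, hu⟩
  have hvN₁ : v ∈ (cplxGraph S.Kx).neighborSet a :=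
    ⟨fun h => hva h.symm, S.Fx, S.hFx, ha, hv⟩
  have hmuN₂ : S.m u ∈ (cplxGraph S.Ky).neighborSet b :=
    ⟨hbu, S.Fy, S.hFy, hbF, by rw [hFyeq]; simp⟩
  have hmvN₂ : S.m v ∈ (cplxGraph S.Ky).neighborSet b :=
    ⟨hbv, S.Fy, S.hFy, hbF, by rw [hFyeq]; simp⟩
  have hC₁adj : ((linkGraph S.Kx a).induce ((cplxGraph S.Kx).neighborSet a)).Adj
      ⟨u, huN₁⟩ ⟨v, hvN₁⟩ :=
    show (linkGraph S.Kx a).Adj u v from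
      ⟨huv, hua, hva, by rw [← hFxeq]; exact S.hFx⟩
  have hC₂adj : ((linkGraph S.Ky b).induce ((cplxGraph S.Ky).neighborSet b)).Adj
      ⟨S.m u, hmuN₂⟩ ⟨S.m v, hmvN₂⟩ :=
    show (linkGraph S.Ky b).Adj (S.m u) (S.m v) from
      ⟨hmu_ne, hbu.symm, hbv.symm, by rw [← hFyeq]; exact S.hFy⟩
  have hD₁conn := cycle_delete_connected (S.hKx.2.2.2 a (Finset.mem_univ a)) hC₁adj
  have hD₂conn := cycle_delete_connected (S.hKy.2.2.2 b (Finset.mem_univ b)) hC₂adj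
  have hz₀mem : S.jx u ∈ (cplxGraph S.glued).neighborSet (S.jx a) := S.adj_push huN₁
  set z₀ : ↥((cplxGraph S.glued).neighborSet (S.jx a)) := ⟨S.jx u, hz₀mem⟩ with hz₀def
  set L := (linkGraph S.glued (S.jx a)).induce ((cplxGraph S.glued).neighborSet (S.jx a))
    with hLdef
  -- hom from the X side deleted cycle
  have hmapx : ∀ x : ↥((cplxGraph S.Kx).neighborSet a),
      S.jx ↑x ∈ (cplxGraph S.glued).neighborSet (S.jx a) := fun x => S.adj_push x.2
  let g₁ : (((linkGraph S.Kx a).induce ((cplxGraph S.Kx).neighborSet a)).deleteEdges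
      {s(⟨u, huN₁⟩, ⟨v, hvN₁⟩)}) →g L := by
    refine ⟨fun x => ⟨S.jx ↑x, hmapx x⟩, ?_⟩
    rintro ⟨x, hx⟩ ⟨y, hy⟩ hD
    obtain ⟨hC, hs⟩ := SimpleGraph.deleteEdges_adj.1 hD
    obtain ⟨hxy, hxa, hya, hmem⟩ := (hC : (linkGraph S.Kx a).Adj x y)
    have hne1 : ({a, x, y} : Finset X) ≠ S.Fx := by
      intro hh
      apply hs
      rw [Set.mem_singleton_iff, Sym2.eq_iff]
      have hxF : x ∈ ({a, u, v} : Finset X) := by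
        rw [← hFxeq, ← hh]; simp
      have hyF : y ∈ ({a, u, v} : Finset X) := by
        rw [← hFxeq, ← hh]; simp
      have hxuv : x = u ∨ x = v := by
        rcases Finset.mem_insert.1 hxF with h | h
        · exact absurd h hxa
        · simpa using h
      have hyuv : y = u ∨ y = v := by
        rcases Finset.mem_insert.1 hyF with h | h
        · exact absurd h hya
        · simpa using h
      rcases hxuv with h1 | h1 <;> rcases hyuv with h2 | h2
      · exact absurd (h1.trans h2.symm) hxy
      · exact Or.inl ⟨Subtype.ext h1, Subtype.ext h2⟩
      · exact Or.inr ⟨Subtype.ext h1, Subtype.ext h2⟩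
      · exact absurd (h1.trans h2.symm) hxy
    have hne2 : ({a, x, y} : Finset X) ≠ S.Fx' := fun hh =>
      S.disjx a ha (hh ▸ Finset.mem_insert_self a _)
    exact S.link_adj_push ⟨hxy, hxa, hya, hmem⟩ hne1 hne2
  -- hom from the Y side deleted cycle
  have hmapy : ∀ y, (cplxGraph S.Ky).Adj b y →
      S.jy y ∈ (cplxGraph S.glued).neighborSet (S.jx a) := by
    intro y hy
    have h := S.swap.adj_push hy
    rw [S.swap_glued] at h
    rwa [hwb]
  let g₂ : (((linkGraph S.Ky b).induce ((cplxGraph S.Ky).neighborSet b)).deleteEdges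
      {s(⟨S.m u, hmuN₂⟩, ⟨S.m v, hmvN₂⟩)}) →g L := by
    refine ⟨fun y => ⟨S.jy ↑y, hmapy ↑y y.2⟩, ?_⟩
    rintro ⟨y, hy⟩ ⟨y', hy'⟩ hD
    obtain ⟨hC, hs⟩ := SimpleGraph.deleteEdges_adj.1 hD
    obtain ⟨hyy', hyb, hy'b, hmem⟩ := (hC : (linkGraph S.Ky b).Adj y y')
    have hne1 : ({b, y, y'} : Finset Y) ≠ S.Fy := by
      intro hh
      apply hs
      rw [Set.mem_singleton_iff, Sym2.eq_iff]
      have hxF : y ∈ ({b, S.m u, S.m v} : Finset Y) := by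
        rw [← hFyeq, ← hh]; simp
      have hyF : y' ∈ ({b, S.m u, S.m v} : Finset Y) := by
        rw [← hFyeq, ← hh]; simp
      have hxuv : y = S.m u ∨ y = S.m v := by
        rcases Finset.mem_insert.1 hxF with h | h
        · exact absurd h hyb
        · simpa using h
      have hyuv : y' = S.m u ∨ y' = S.m v := by
        rcases Finset.mem_insert.1 hyF with h | h
        · exact absurd h hy'b
        · simpa using h
      rcases hxuv with h1 | h1 <;> rcases hyuv with h2 | h2
      · exact absurd (h1.trans h2.symm) hyy'
      · exact Or.inl ⟨Subtype.ext h1, Subtype.ext h2⟩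
      · exact Or.inr ⟨Subtype.ext h1, Subtype.ext h2⟩
      · exact absurd (h1.trans h2.symm) hyy'
    have hne2 : ({b, y, y'} : Finset Y) ≠ S.Fy' := by
      intro hh
      have hbmem : b ∈ S.Fy' := hh ▸ Finset.mem_insert_self b _
      exact S.swap.disjx b hbF hbmem
    have hpush := S.swap.link_adj_push ⟨hyy', hyb, hy'b, hmem⟩ hne1 hne2
    rw [S.swap_glued] at hpush
    show (linkGraph S.glued (S.jx a)).Adj (S.jy y) (S.jy y')
    rwa [hwb]
  have hcommon : S.jy (S.m u) = S.jx u := ((S.hmix u (S.m u)).2 (Or.inl ⟨hu, rfl⟩)).symm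
  have hreach : ∀ z : ↥((cplxGraph S.glued).neighborSet (S.jx a)), L.Reachable z z₀ := by
    rintro ⟨z, hz⟩
    rcases S.nbr_cases hz with ⟨x, rfl, hadj⟩ | ⟨h1, y, rfl, hadj⟩ | ⟨h1, -⟩
    · exact (hD₁conn.preconnected ⟨x, hadj⟩ ⟨u, huN₁⟩).map g₁
    · have hr := (hD₂conn.preconnected ⟨y, hadj⟩ ⟨S.m u, hmuN₂⟩).map g₂
      have heq2 : g₂ ⟨S.m u, hmuN₂⟩ = z₀ := Subtype.ext hcommon
      exact heq2 ▸ hr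
    · exact absurd h1 (S.disjx a ha)
  haveI : Nonempty ↥((cplxGraph S.glued).neighborSet (S.jx a)) := ⟨z₀⟩
  exact SimpleGraph.Connected.mk fun z z' => (hreach z).trans (hreach z').symm

lemma link_conn_all (w : W) :
    ((linkGraph S.glued w).induce ((cplxGraph S.glued).neighborSet w)).Connected := by
  rcases S.hsurj w with ⟨a, rfl⟩ | ⟨b, rfl⟩
  · by_cases ha : a ∈ S.Fx
    · exact S.link_conn_glue ha
    · by_cases ha' : a ∈ S.Fx'
      · have h := S.flip.link_conn_glue (ha' : a ∈ S.flip.Fx)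
        rwa [S.flip_glued] at h
      · exact S.link_conn_pure ha ha'
  · by_cases hb : b ∈ S.Fy
    · have h := S.swap.link_conn_glue (hb : b ∈ S.swap.Fx)
      rwa [S.swap_glued] at h
    · by_cases hb' : b ∈ S.Fy'
      · have h := S.swap.flip.link_conn_glue (hb' : b ∈ S.swap.flip.Fx)
        rwa [S.swap.flip_glued, S.swap_glued] at h
      · have h := S.swap.link_conn_pure hb hb'
        rwa [S.swap_glued] at h

lemma glued_conn :
    ((cplxGraph S.glued).induce ((Finset.univ : Finset W) : Set W)).Connected := by
  rw [Finset.coe_univ]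
  apply conn_induce_univ
  have hane : S.Fx.Nonempty := by rw [← Finset.card_pos, S.cardFx]; norm_num
  obtain ⟨a₀, ha₀⟩ := hane
  let homx : cplxGraph S.Kx →g cplxGraph S.glued := ⟨S.jx, fun h => S.adj_push h⟩
  let homy : cplxGraph S.Ky →g cplxGraph S.glued :=
    ⟨S.jy, fun {p q} h => by
      have h' := S.swap.adj_push h
      rwa [S.swap_glued] at h'⟩
  have hreach : ∀ w : W, (cplxGraph S.glued).Reachable w (S.jx a₀) := by
    intro w
    rcases S.hsurj w with ⟨a, rfl⟩ | ⟨b, rfl⟩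
    · exact (S.cplx_conn_x.preconnected a a₀).map homx
    · have h1 : (cplxGraph S.glued).Reachable (S.jy b) (S.jy (S.m a₀)) :=
        (S.swap.cplx_conn_x.preconnected b (S.m a₀)).map homy
      have h2 : S.jy (S.m a₀) = S.jx a₀ := ((S.hmix a₀ (S.m a₀)).2 (Or.inl ⟨ha₀, rfl⟩)).symm
      rwa [h2] at h1
  haveI : Nonempty W := ⟨S.jx a₀⟩
  exact SimpleGraph.Connected.mk fun z z' => (hreach z).trans (hreach z').symm

lemma glued_surface : IsTriSurfaceOn Finset.univ S.glued :=
  ⟨fun T hT => ⟨S.glued_card3 T hT, Finset.subset_univ T⟩, S.glued_conn, S.glued_edges_two,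
   fun w _ => ⟨S.link_conn_all w,
     fun z => link_two_regular S.glued_card3 S.glued_edges_two w z⟩⟩

end GS

namespace GS

variable {X Y W : Type} [Fintype X] [DecidableEq X] [Fintype Y] [DecidableEq Y]
  [Fintype W] [DecidableEq W] (S : GS X Y W)

lemma Fx_ne_Fx' : S.Fx ≠ S.Fx' := by
  intro h
  have hne : S.Fx.Nonempty := by rw [← Finset.card_pos, S.cardFx]; norm_num
  obtain ⟨x, hx⟩ := hne
  exact S.disjx x hx (h ▸ hx)

lemma card_glued_aux : S.glued.card + 4 = S.Kx.card + S.Ky.card := by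
  have hdisj : Disjoint (S.Ax.image (Finset.image S.jx)) (S.By.image (Finset.image S.jy)) := by
    rw [Finset.disjoint_left]
    rintro SS h1 h2
    obtain ⟨T, hT, rfl⟩ := Finset.mem_image.1 h1
    obtain ⟨T', hT', heq⟩ := Finset.mem_image.1 h2
    exact S.img_ne hT heq.symm
  have h1 : S.glued.card = S.Ax.card + S.By.card := by
    rw [glued, Finset.card_union_of_disjoint hdisj,
      Finset.card_image_of_injective _ (Finset.image_injective S.hjx),
      Finset.card_image_of_injective _ (Finset.image_injective S.hjy)]
  have hFx'mem : S.Fx' ∈ S.Kx.erase S.Fx :=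
    Finset.mem_erase.2 ⟨fun h => S.Fx_ne_Fx' h.symm, S.hFx'⟩
  have hFy'mem : S.Fy' ∈ S.Ky.erase S.Fy :=
    Finset.mem_erase.2 ⟨fun h => S.swap.Fx_ne_Fx' h.symm, S.hFy'⟩
  have e1 : (S.Kx.erase S.Fx).card + 1 = S.Kx.card := Finset.card_erase_add_one S.hFx
  have e2 : S.Ax.card + 1 = (S.Kx.erase S.Fx).card := Finset.card_erase_add_one hFx'mem
  have e3 : (S.Ky.erase S.Fy).card + 1 = S.Ky.card := Finset.card_erase_add_one S.hFy
  have e4 : S.By.card + 1 = (S.Ky.erase S.Fy).card := Finset.card_erase_add_one hFy'mem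
  omega

lemma triEdges_glued_eq : triEdges S.glued =
    (triEdges S.Kx).image (Finset.image S.jx) ∪ (triEdges S.Ky).image (Finset.image S.jy) := by
  ext e
  constructor
  · intro he
    rcases S.edge_decomp he with ⟨e₁, he₁, rfl⟩ | ⟨e₂, he₂, rfl⟩
    · exact Finset.mem_union_left _ (Finset.mem_image_of_mem _ he₁)
    · exact Finset.mem_union_right _ (Finset.mem_image_of_mem _ he₂)
  · intro he
    rcases Finset.mem_union.1 he with h | h
    · obtain ⟨e₁, he₁, rfl⟩ := Finset.mem_image.1 h
      exact S.push_edge he₁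
    · obtain ⟨e₂, he₂, rfl⟩ := Finset.mem_image.1 h
      have hp : e₂.image S.jy ∈ triEdges S.swap.glued := S.swap.push_edge he₂
      rwa [S.swap_glued] at hp

lemma triEdges_inter :
    (triEdges S.Kx).image (Finset.image S.jx) ∩ (triEdges S.Ky).image (Finset.image S.jy)
    = ((S.Fx.powersetCard 2) ∪ (S.Fx'.powersetCard 2)).image (Finset.image S.jx) := by
  ext e
  constructor
  · intro hmem
    obtain ⟨h1, h2⟩ := Finset.mem_inter.1 hmem
    obtain ⟨e₁, he₁, rfl⟩ := Finset.mem_image.1 h1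
    obtain ⟨e₂, he₂, heq⟩ := Finset.mem_image.1 h2
    have hsub : e₁ ⊆ S.Fx ∪ S.Fx' := S.img_sub (Finset.le_iff_subset.1 heq.symm.le)
    have hcard : e₁.card = 2 := (mem_triEdges.1 he₁).choose_spec.2.2
    rcases S.edge_pure he₁ hsub with h | h
    · exact Finset.mem_image.2 ⟨e₁,
        Finset.mem_union_left _ (Finset.mem_powersetCard.2 ⟨h, hcard⟩), rfl⟩
    · exact Finset.mem_image.2 ⟨e₁,
        Finset.mem_union_right _ (Finset.mem_powersetCard.2 ⟨h, hcard⟩), rfl⟩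
  · intro hmem
    obtain ⟨e₀, he₀, rfl⟩ := Finset.mem_image.1 hmem
    rcases Finset.mem_union.1 he₀ with h | h
    · obtain ⟨hsub, hcard⟩ := Finset.mem_powersetCard.1 h
      refine Finset.mem_inter.2
        ⟨Finset.mem_image_of_mem _ (edge_mem S.hFx hsub hcard), ?_⟩
      rw [S.image_eq_on_Fx hsub]
      exact Finset.mem_image_of_mem _
        (edge_mem S.hFy (S.m_sub hsub) (by rw [S.m_card hsub, hcard]))
    · obtain ⟨hsub, hcard⟩ := Finset.mem_powersetCard.1 h
      have hE : e₀.image S.jx = (e₀.image S.m').image S.jy := S.flip.image_eq_on_Fx hsub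
      have hms : e₀.image S.m' ⊆ S.Fy' := S.flip.m_sub hsub
      have hmc : (e₀.image S.m').card = e₀.card := S.flip.m_card hsub
      refine Finset.mem_inter.2
        ⟨Finset.mem_image_of_mem _ (edge_mem S.hFx' hsub hcard), ?_⟩
      rw [hE]
      exact Finset.mem_image_of_mem _ (edge_mem S.hFy' hms (by rw [hmc, hcard]))

lemma card_triEdges_glued :
    (triEdges S.glued).card + 6 = (triEdges S.Kx).card + (triEdges S.Ky).card := by
  have h := Finset.card_union_add_card_inter
    ((triEdges S.Kx).image (Finset.image S.jx)) ((triEdges S.Ky).image (Finset.image S.jy))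
  rw [← S.triEdges_glued_eq, S.triEdges_inter] at h
  rw [Finset.card_image_of_injective _ (Finset.image_injective S.hjx),
    Finset.card_image_of_injective _ (Finset.image_injective S.hjy),
    Finset.card_image_of_injective _ (Finset.image_injective S.hjx)] at h
  have hdisj : Disjoint (S.Fx.powersetCard 2) (S.Fx'.powersetCard 2) := by
    rw [Finset.disjoint_left]
    intro e h1 h2
    obtain ⟨hs1, hc⟩ := Finset.mem_powersetCard.1 h1
    obtain ⟨hs2, -⟩ := Finset.mem_powersetCard.1 h2
    have hne : e.Nonempty := by rw [← Finset.card_pos, hc]; norm_num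
    obtain ⟨x, hx⟩ := hne
    exact S.disjx x (hs1 hx) (hs2 hx)
  have hc6 : (S.Fx.powersetCard 2 ∪ S.Fx'.powersetCard 2).card = 6 := by
    rw [Finset.card_union_of_disjoint hdisj, Finset.card_powersetCard,
      Finset.card_powersetCard, S.cardFx, S.cardFx']
    norm_num
  rw [hc6] at h
  omega

lemma card_univ_W (S : GS X Y W) : (Finset.univ : Finset W).card + 6
    = (Finset.univ : Finset X).card + (Finset.univ : Finset Y).card := by
  have hcover : (Finset.univ : Finset W)
      = Finset.univ.image S.jx ∪ Finset.univ.image S.jy := by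
    ext w
    simp only [Finset.mem_univ, true_iff, Finset.mem_union, Finset.mem_image]
    rcases S.hsurj w with ⟨a, rfl⟩ | ⟨b, rfl⟩
    · exact Or.inl ⟨a, trivial, rfl⟩
    · exact Or.inr ⟨b, trivial, rfl⟩
  have hinter : Finset.univ.image S.jx ∩ Finset.univ.image S.jy
      = (S.Fx ∪ S.Fx').image S.jx := by
    ext w
    constructor
    · intro h
      obtain ⟨h1, h2⟩ := Finset.mem_inter.1 h
      obtain ⟨a, -, rfl⟩ := Finset.mem_image.1 h1
      obtain ⟨b, -, heq⟩ := Finset.mem_image.1 h2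
      rcases (S.hmix a b).1 heq.symm with ⟨h3, -⟩ | ⟨h3, -⟩
      · exact Finset.mem_image.2 ⟨a, Finset.mem_union_left _ h3, rfl⟩
      · exact Finset.mem_image.2 ⟨a, Finset.mem_union_right _ h3, rfl⟩
    · intro h
      obtain ⟨a, ha, rfl⟩ := Finset.mem_image.1 h
      refine Finset.mem_inter.2 ⟨Finset.mem_image.2 ⟨a, Finset.mem_univ a, rfl⟩, ?_⟩
      rcases Finset.mem_union.1 ha with h | h
      · exact Finset.mem_image.2 ⟨S.m a, Finset.mem_univ _,
          ((S.hmix a _).2 (Or.inl ⟨h, rfl⟩)).symm⟩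
      · exact Finset.mem_image.2 ⟨S.m' a, Finset.mem_univ _,
          ((S.hmix a _).2 (Or.inr ⟨h, rfl⟩)).symm⟩
  have hFF : (S.Fx ∪ S.Fx').card = 6 := by
    rw [Finset.card_union_of_disjoint
      (Finset.disjoint_left.2 fun a ha ha' => S.disjx a ha ha'), S.cardFx, S.cardFx']
  have h := Finset.card_union_add_card_inter (Finset.univ.image S.jx) (Finset.univ.image S.jy)
  rw [← hcover, hinter, Finset.card_image_of_injective _ S.hjx,
    Finset.card_image_of_injective _ S.hjy, Finset.card_image_of_injective _ S.hjx, hFF] at h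
  omega

lemma euler_glued : eulerCharOn Finset.univ S.glued =
    eulerCharOn (Finset.univ : Finset X) S.Kx + eulerCharOn (Finset.univ : Finset Y) S.Ky - 4 := by
  have h1 := S.card_glued_aux
  have h2 := S.card_triEdges_glued
  have h3 := card_univ_W S
  unfold eulerCharOn
  omega

end GS

/-- Connected sum of two centrally symmetric triangulated closed surfaces along a
pair of triangle orbits: the result is a centrally symmetric triangulated closed
surface, with Euler characteristic `χ(K₁) + χ(K₂) - 4`. -/
theorem glue_CS_surfaces {V₁ V₂ W : Type} [Fintype V₁] [DecidableEq V₁]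
    [Fintype V₂] [DecidableEq V₂] [Fintype W] [DecidableEq W]
    (K₁ : Finset (Finset V₁)) (K₂ : Finset (Finset V₂))
    (σ₁ : V₁ → V₁) (σ₂ : V₂ → V₂)
    (hK₁ : IsTriSurfaceOn Finset.univ K₁) (hK₂ : IsTriSurfaceOn Finset.univ K₂)
    (hCS₁ : IsCSOn Finset.univ K₁ σ₁) (hCS₂ : IsCSOn Finset.univ K₂ σ₂)
    (F₁ : Finset V₁) (F₂ : Finset V₂) (hF₁ : F₁ ∈ K₁) (hF₂ : F₂ ∈ K₂)
    (hedge₁ : ∀ a ∈ F₁, ∀ b ∈ F₁.image σ₁, ({a, b} : Finset V₁) ∉ triEdges K₁)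
    (hedge₂ : ∀ a ∈ F₂, ∀ b ∈ F₂.image σ₂, ({a, b} : Finset V₂) ∉ triEdges K₂)
    (φ : V₁ → V₂) (hφ : Set.BijOn φ (F₁ : Set V₁) (F₂ : Set V₂))
    (q : V₁ ⊕ V₂ → W) (hq_surj : Function.Surjective q)
    (hq : ∀ x y : V₁ ⊕ V₂,
      q x = q y ↔ x = y ∨ Glue σ₁ σ₂ F₁ φ x y ∨ Glue σ₁ σ₂ F₁ φ y x) :
    IsTriSurfaceOn Finset.univ (glueComplex K₁ K₂ σ₁ σ₂ F₁ F₂ q) ∧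
    (∀ σW : W → W,
      (∀ a : V₁, σW (q (Sum.inl a)) = q (Sum.inl (σ₁ a))) →
      (∀ b : V₂, σW (q (Sum.inr b)) = q (Sum.inr (σ₂ b))) →
      IsCSOn Finset.univ (glueComplex K₁ K₂ σ₁ σ₂ F₁ F₂ q) σW) ∧
    eulerCharOn Finset.univ (glueComplex K₁ K₂ σ₁ σ₂ F₁ F₂ q) =
      eulerCharOn Finset.univ K₁ + eulerCharOn Finset.univ K₂ - 4 := by
  classical
  have hσ₁ : ∀ v : V₁, σ₁ (σ₁ v) = v := fun v => hCS₁.2.1 v (Finset.mem_univ v)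
  have hσ₂ : ∀ v : V₂, σ₂ (σ₂ v) = v := fun v => hCS₂.2.1 v (Finset.mem_univ v)
  have hσ₁inj : Function.Injective σ₁ := Function.Involutive.injective hσ₁
  have hσ₂inj : Function.Injective σ₂ := Function.Involutive.injective hσ₂
  have hbij2 : Set.BijOn σ₂ (F₂ : Set V₂) ((F₂.image σ₂ : Finset V₂) : Set V₂) := by
    rw [Finset.coe_image]
    exact Set.InjOn.bijOn_image (Set.injOn_of_injective hσ₂inj)
  have hbij0 : Set.BijOn σ₁ ((F₁.image σ₁ : Finset V₁) : Set V₁) (F₁ : Set V₁) := by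
    refine ⟨?_, Set.injOn_of_injective hσ₁inj, ?_⟩
    · rintro x hx
      rw [Finset.coe_image] at hx
      obtain ⟨a, ha, rfl⟩ := hx
      show σ₁ (σ₁ a) ∈ (F₁ : Set V₁)
      rw [hσ₁ a]; exact ha
    · rintro a ha
      refine ⟨σ₁ a, ?_, hσ₁ a⟩
      rw [Finset.coe_image]
      exact Set.mem_image_of_mem _ ha
  have hψ : Set.BijOn (fun x => σ₂ (φ (σ₁ x))) ((F₁.image σ₁ : Finset V₁) : Set V₁)
      ((F₂.image σ₂ : Finset V₂) : Set V₂) :=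
    Set.BijOn.comp hbij2 (Set.BijOn.comp hφ hbij0)
  have hqinl : Function.Injective (q ∘ Sum.inl) := by
    intro a a' h
    rcases (hq _ _).1 h with h' | h' | h'
    · exact Sum.inl.inj h'
    · obtain ⟨a₀, h1, h2⟩ := h'
      rcases h2 with ⟨-, h3⟩ | ⟨-, h3⟩ <;> simp at h3
    · obtain ⟨a₀, h1, h2⟩ := h'
      rcases h2 with ⟨-, h3⟩ | ⟨-, h3⟩ <;> simp at h3
  have hqinr : Function.Injective (q ∘ Sum.inr) := by
    intro b b' h
    rcases (hq _ _).1 h with h' | h' | h'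
    · exact Sum.inr.inj h'
    · obtain ⟨a₀, h1, -⟩ := h'
      simp at h1
    · obtain ⟨a₀, h1, -⟩ := h'
      simp at h1
  have hqmix : ∀ (a : V₁) (b : V₂), (q ∘ Sum.inl) a = (q ∘ Sum.inr) b ↔
      (a ∈ F₁ ∧ b = φ a) ∨ (a ∈ F₁.image σ₁ ∧ b = σ₂ (φ (σ₁ a))) := by
    intro a b
    show q (Sum.inl a) = q (Sum.inr b) ↔ _
    rw [hq]
    constructor
    · rintro (h | h | h)
      · simp at h
      · obtain ⟨a₀, h1, h2⟩ := h
        have ha₀ : a₀ = a := (Sum.inl.inj h1).symm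
        subst ha₀
        rcases h2 with ⟨h3, h4⟩ | ⟨h3, h4⟩
        · exact Or.inl ⟨h3, Sum.inr.inj h4⟩
        · exact Or.inr ⟨h3, Sum.inr.inj h4⟩
      · obtain ⟨a₀, h1, -⟩ := h
        simp at h1
    · rintro (⟨h1, rfl⟩ | ⟨h1, rfl⟩)
      · exact Or.inr (Or.inl ⟨a, rfl, Or.inl ⟨h1, rfl⟩⟩)
      · exact Or.inr (Or.inl ⟨a, rfl, Or.inr ⟨h1, rfl⟩⟩)
  set S : GS V₁ V₂ W :=
    { Kx := K₁, Ky := K₂, Fx := F₁, Fx' := F₁.image σ₁, Fy := F₂, Fy' := F₂.image σ₂,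
      jx := q ∘ Sum.inl, jy := q ∘ Sum.inr, m := φ, m' := fun x => σ₂ (φ (σ₁ x)),
      hKx := hK₁, hKy := hK₂, hFx := hF₁, hFx' := hCS₁.2.2.1 F₁ hF₁, hFy := hF₂,
      hFy' := hCS₂.2.2.1 F₂ hF₂, hedgex := hedge₁, hedgey := hedge₂, hm := hφ, hm' := hψ,
      hjx := hqinl, hjy := hqinr, hmix := hqmix,
      hsurj := fun w => by
        obtain ⟨x, rfl⟩ := hq_surj w
        cases x with
        | inl a => exact Or.inl ⟨a, rfl⟩
        | inr b => exact Or.inr ⟨b, rfl⟩ } with hSdef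
  have hglue : glueComplex K₁ K₂ σ₁ σ₂ F₁ F₂ q = S.glued := rfl
  have himgiter : ∀ T : Finset V₁, (T.image σ₁).image σ₁ = T := by
    intro T
    ext x
    rw [Finset.image_image]
    constructor
    · intro hx
      obtain ⟨t, ht, hteq⟩ := Finset.mem_image.1 hx
      have h' : σ₁ (σ₁ t) = x := hteq
      rw [hσ₁ t] at h'
      rwa [← h']
    · intro hx
      exact Finset.mem_image.2 ⟨x, hx, hσ₁ x⟩
  have himgiter₂ : ∀ T : Finset V₂, (T.image σ₂).image σ₂ = T := by
    intro T
    ext x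
    rw [Finset.image_image]
    constructor
    · intro hx
      obtain ⟨t, ht, hteq⟩ := Finset.mem_image.1 hx
      have h' : σ₂ (σ₂ t) = x := hteq
      rw [hσ₂ t] at h'
      rwa [← h']
    · intro hx
      exact Finset.mem_image.2 ⟨x, hx, hσ₂ x⟩
  refine ⟨?_, ?_, ?_⟩
  · rw [hglue]; exact S.glued_surface
  · -- central symmetry
    intro σW hs1 hs2
    rw [hglue]
    have hcomm₁ : ∀ T : Finset V₁, (T.image S.jx).image σW = (T.image σ₁).image S.jx := by
      intro T
      rw [Finset.image_image, Finset.image_image]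
      apply Finset.image_congr
      intro t ht
      exact hs1 t
    have hcomm₂ : ∀ T : Finset V₂, (T.image S.jy).image σW = (T.image σ₂).image S.jy := by
      intro T
      rw [Finset.image_image, Finset.image_image]
      apply Finset.image_congr
      intro t ht
      exact hs2 t
    refine ⟨fun x _ => by simp, ?_, ?_, ?_, ?_, ?_⟩
    · -- involution
      intro w _
      rcases S.hsurj w with ⟨a, rfl⟩ | ⟨b, rfl⟩
      · show σW (σW (q (Sum.inl a))) = q (Sum.inl a)
        rw [hs1 a, hs1 (σ₁ a), hσ₁ a]
      · show σW (σW (q (Sum.inr b))) = q (Sum.inr b)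
        rw [hs2 b, hs2 (σ₂ b), hσ₂ b]
    · -- triangles closed
      intro T hT
      rcases S.mem_glued.1 hT with ⟨T₁, hT₁, rfl⟩ | ⟨T₂, hT₂, rfl⟩
      · rw [hcomm₁]
        refine S.mem_glued.2 (Or.inl ⟨T₁.image σ₁,
          S.mem_Ax.2 ⟨hCS₁.2.2.1 _ (S.Ax_subset hT₁), ?_, ?_⟩, rfl⟩)
        · intro h
          apply (S.mem_Ax.1 hT₁).2.2
          show T₁ = F₁.image σ₁
          rw [← himgiter T₁, h]
        · intro h
          exact (S.mem_Ax.1 hT₁).2.1 (Finset.image_injective hσ₁inj h)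
      · rw [hcomm₂]
        refine S.mem_glued.2 (Or.inr ⟨T₂.image σ₂,
          S.mem_By.2 ⟨hCS₂.2.2.1 _ (S.swap.Ax_subset hT₂), ?_, ?_⟩, rfl⟩)
        · intro h
          apply (S.mem_By.1 hT₂).2.2
          show T₂ = F₂.image σ₂
          rw [← himgiter₂ T₂, h]
        · intro h
          exact (S.mem_By.1 hT₂).2.1 (Finset.image_injective hσ₂inj h)
    · -- fixed point free on vertices
      intro w _
      rcases S.hsurj w with ⟨a, rfl⟩ | ⟨b, rfl⟩
      · show σW (q (Sum.inl a)) ≠ q (Sum.inl a)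
        rw [hs1 a]
        intro h
        exact hCS₁.2.2.2.1 a (Finset.mem_univ a) (hqinl h)
      · show σW (q (Sum.inr b)) ≠ q (Sum.inr b)
        rw [hs2 b]
        intro h
        exact hCS₂.2.2.2.1 b (Finset.mem_univ b) (hqinr h)
    · -- fixed point free on edges
      intro e he
      rcases S.edge_decomp he with ⟨e₁, he₁, rfl⟩ | ⟨e₂, he₂, rfl⟩
      · rw [hcomm₁]
        intro h
        exact hCS₁.2.2.2.2.1 e₁ he₁ (Finset.image_injective hqinl h)
      · rw [hcomm₂]
        intro h
        exact hCS₂.2.2.2.2.1 e₂ he₂ (Finset.image_injective hqinr h)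
    · -- fixed point free on triangles
      intro T hT
      rcases S.mem_glued.1 hT with ⟨T₁, hT₁, rfl⟩ | ⟨T₂, hT₂, rfl⟩
      · rw [hcomm₁]
        intro h
        exact hCS₁.2.2.2.2.2 T₁ (S.Ax_subset hT₁) (Finset.image_injective hqinl h)
      · rw [hcomm₂]
        intro h
        exact hCS₂.2.2.2.2.2 T₂ (S.swap.Ax_subset hT₂) (Finset.image_injective hqinr h)
  · rw [hglue]
    exact S.euler_glued
end

section
/- On the vertex set {1, 2, ..., 24}, the family of 12 hexagonal faces (given as cycles) [1,2,3,8,7,6], [3,4,5,10,9,8], [5,6,7,12,11,10], [7,8,9,14,13,12], [9,10,11,16,15,14], [11,12,13,18,17,16], [13,14,15,20,19,18], [15,16,17,22,21,20], [17,18,19,24,23,22], [19,20,21,2,1,24], [21,22,23,4,3,2], [23,24,1,6,5,4] is a polyhedral map with Euler characteristic 0 (a map on the torus) all of whose faces are hexagons, and it is centrally symmetric under the involution (1 13)(2 14)(3 15)(4 16)(5 17)(6 18)(7 19)(8 20)(9 21)(10 22)(11 23)(12 24). -/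
section Map

variable {V : Type*} [DecidableEq V]

/-- The vertex set of a face, a face being recorded by its set of edges. -/
def faceVerts (F : Finset (Finset V)) : Finset V := F.biUnion id

/-- The graph determined by a set `E` of (2-element) edges. -/
def edgeGraph (E : Finset (Finset V)) : SimpleGraph V where
  Adj a b := a ≠ b ∧ ({a, b} : Finset V) ∈ E
  symm := by
    constructor
    rintro a b ⟨h1, h2⟩
    refine ⟨h1.symm, ?_⟩
    rwa [Finset.pair_comm b a]
  loopless := ⟨fun a h => h.1 rfl⟩

/-- A face, recorded by its set of edges, is a cycle (of length `≥ 3`): every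
edge has two vertices and the graph it spans is a single cycle. -/
def IsCycleFace (F : Finset (Finset V)) : Prop :=
  (∀ e ∈ F, e.card = 2) ∧
  IsSingleCycle ((edgeGraph F).induce (faceVerts F : Set V))

/-- The edges of a map, a map being recorded as the set of its faces,
each face recorded as its set of edges. -/
def mapEdges (𝓕 : Finset (Finset (Finset V))) : Finset (Finset V) := 𝓕.biUnion id

/-- Two faces are adjacent at `v` if they share an edge through `v`. -/
def vertexFaceGraph (v : V) : SimpleGraph (Finset (Finset V)) where
  Adj F G := F ≠ G ∧ ∃ e : Finset V, v ∈ e ∧ e ∈ F ∧ e ∈ G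
  symm := by
    constructor
    rintro F G ⟨h1, e, he, hF, hG⟩
    exact ⟨h1.symm, e, he, hG, hF⟩
  loopless := ⟨fun F h => h.1 rfl⟩

/-- The faces of the map containing the vertex `v`. -/
def facesAt (𝓕 : Finset (Finset (Finset V))) (v : V) : Finset (Finset (Finset V)) :=
  𝓕.filter fun F => v ∈ faceVerts F

/-- `𝓕` is a polyhedral map on the vertex set `W`: every face is a cycle on vertices
of `W`, the underlying graph is connected, every edge lies in exactly two faces,
two distinct faces meet in at most a vertex or a single common edge, and the faces
at every vertex form a single cycle, consecutive ones sharing an edge through `v`. -/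
def IsPolyMapOn (W : Finset V) (𝓕 : Finset (Finset (Finset V))) : Prop :=
  (∀ F ∈ 𝓕, IsCycleFace F ∧ faceVerts F ⊆ W) ∧
  ((edgeGraph (mapEdges 𝓕)).induce (W : Set V)).Connected ∧
  (∀ e ∈ mapEdges 𝓕, (𝓕.filter fun F => e ∈ F).card = 2) ∧
  (∀ F ∈ 𝓕, ∀ G ∈ 𝓕, F ≠ G →
    (faceVerts F ∩ faceVerts G).card ≤ 1 ∨
    ((faceVerts F ∩ faceVerts G).card = 2 ∧ F ∩ G = {faceVerts F ∩ faceVerts G})) ∧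
  (∀ v ∈ W, IsSingleCycle ((vertexFaceGraph v).induce (facesAt 𝓕 v : Set (Finset (Finset V)))))

/-- Euler characteristic of the map `𝓕` on vertex set `W`. -/
def eulerCharMapOn (W : Finset V) (𝓕 : Finset (Finset (Finset V))) : ℤ :=
  (W.card : ℤ) - ((mapEdges 𝓕).card : ℤ) + (𝓕.card : ℤ)

/-- Orientability: each face cycle can be directed so that each edge receives
opposite directions from the two faces containing it. -/
def IsOrientableMap (𝓕 : Finset (Finset (Finset V))) : Prop :=
  ∃ ori : Finset (Finset V) → V → V → Bool,
    (∀ F ∈ 𝓕, ∀ a b : V, a ≠ b → ({a, b} : Finset V) ∈ F → ori F a b = !ori F b a) ∧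
    (∀ F ∈ 𝓕, ∀ u w x : V, u ≠ x → ({u, w} : Finset V) ∈ F → ({w, x} : Finset V) ∈ F →
      ori F u w = ori F w x) ∧
    (∀ F ∈ 𝓕, ∀ G ∈ 𝓕, F ≠ G → ∀ a b : V, a ≠ b → ({a, b} : Finset V) ∈ F →
      ({a, b} : Finset V) ∈ G → ori F a b = ori G b a)

/-- The map `𝓕` on vertex set `W` is centrally symmetric under the involution `σ`:
`σ` maps faces to faces and fixes no vertex, no edge and no face (faces compared
as vertex sets). -/
def IsCSMapOn (W : Finset V) (𝓕 : Finset (Finset (Finset V))) (σ : V → V) : Prop :=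
  Set.MapsTo σ (W : Set V) (W : Set V) ∧
  (∀ v ∈ W, σ (σ v) = v) ∧
  (∀ F ∈ 𝓕, F.image (Finset.image σ) ∈ 𝓕) ∧
  (∀ v ∈ W, σ v ≠ v) ∧
  (∀ e ∈ mapEdges 𝓕, e.image σ ≠ e) ∧
  (∀ F ∈ 𝓕, (faceVerts F).image σ ≠ faceVerts F)

end Map

/-- The 12 hexagonal faces of the torus map, each face given by its set of edges. -/
def hexTorusFaces : Finset (Finset (Finset ℕ)) :=
  {{{1, 2}, {2, 3}, {3, 8}, {8, 7}, {7, 6}, {6, 1}},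
    {{3, 4}, {4, 5}, {5, 10}, {10, 9}, {9, 8}, {8, 3}},
    {{5, 6}, {6, 7}, {7, 12}, {12, 11}, {11, 10}, {10, 5}},
    {{7, 8}, {8, 9}, {9, 14}, {14, 13}, {13, 12}, {12, 7}},
    {{9, 10}, {10, 11}, {11, 16}, {16, 15}, {15, 14}, {14, 9}},
    {{11, 12}, {12, 13}, {13, 18}, {18, 17}, {17, 16}, {16, 11}},
    {{13, 14}, {14, 15}, {15, 20}, {20, 19}, {19, 18}, {18, 13}},
    {{15, 16}, {16, 17}, {17, 22}, {22, 21}, {21, 20}, {20, 15}},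
    {{17, 18}, {18, 19}, {19, 24}, {24, 23}, {23, 22}, {22, 17}},
    {{19, 20}, {20, 21}, {21, 2}, {2, 1}, {1, 24}, {24, 19}},
    {{21, 22}, {22, 23}, {23, 4}, {4, 3}, {3, 2}, {2, 21}},
    {{23, 24}, {24, 1}, {1, 6}, {6, 5}, {5, 4}, {4, 23}}}

/-- The involution `(1 13)(2 14) ... (12 24)` of `{1, ..., 24}`. -/
def hexTorusInvolution : ℕ → ℕ := fun n => if n ≤ 12 then n + 12 else n - 12


section Aux

instance (priority := 2000) myConnDec {α : Type*} [Fintype α] [DecidableEq α] (G : SimpleGraph α)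
    [DecidableRel G.Adj] : Decidable G.Connected :=
  decidable_of_iff (G.Preconnected ∧ 0 < Fintype.card α)
    (by rw [Fintype.card_pos_iff]; exact G.connected_iff.symm)

instance myCycleDec {α : Type*} [Fintype α] [DecidableEq α] (G : SimpleGraph α)
    [DecidableRel G.Adj] : Decidable (IsSingleCycle G) := by
  have : IsSingleCycle G ↔ (G.Connected ∧ ∀ a, (G.neighborFinset a).card = 2) := by
    unfold IsSingleCycle
    refine and_congr Iff.rfl (forall_congr' fun a => ?_)
    rw [Set.ncard_eq_toFinset_card', ← SimpleGraph.neighborFinset_def]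
  exact decidable_of_iff' _ this

instance (E : Finset (Finset ℕ)) : DecidableRel (edgeGraph E).Adj := fun _ _ =>
  inferInstanceAs (Decidable (_ ∧ _))

instance myInduceDec {α : Type*} (G : SimpleGraph α) [h : DecidableRel G.Adj] (s : Set α) :
    DecidableRel (G.induce s).Adj := fun a b => h a b

instance (v : ℕ) : DecidableRel (vertexFaceGraph v).Adj := fun F G =>
  decidable_of_iff' (F ≠ G ∧ ∃ e ∈ F, v ∈ e ∧ e ∈ G) (by
    constructor
    · rintro ⟨h, e, hv, hF, hG⟩; exact ⟨h, e, hF, hv, hG⟩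
    · rintro ⟨h, e, hF, hv, hG⟩; exact ⟨h, e, hv, hF, hG⟩)

instance (F : Finset (Finset ℕ)) : Decidable (IsCycleFace F) := by
  unfold IsCycleFace; infer_instance

theorem hexTorus_conn :
    ((edgeGraph (mapEdges hexTorusFaces)).induce
      ((Finset.Icc 1 24 : Finset ℕ) : Set ℕ)).Connected := by
  have h1 : (1 : ℕ) ∈ ((Finset.Icc 1 24 : Finset ℕ) : Set ℕ) := by simp
  have hedges : ∀ n ∈ Finset.Icc 1 23, ({n, n + 1} : Finset ℕ) ∈ mapEdges hexTorusFaces := by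
    decide
  have hmem : ∀ n, 1 ≤ n → n ≤ 24 → n ∈ ((Finset.Icc 1 24 : Finset ℕ) : Set ℕ) := by
    intro n ha hb; simp only [Finset.coe_Icc, Set.mem_Icc]; exact ⟨ha, hb⟩
  set G' := (edgeGraph (mapEdges hexTorusFaces)).induce
      ((Finset.Icc 1 24 : Finset ℕ) : Set ℕ) with hG'
  have root : ∀ n (h1n : 1 ≤ n) (h2n : n ≤ 24), G'.Reachable ⟨1, h1⟩ ⟨n, hmem n h1n h2n⟩ := by
    intro n
    induction n with
    | zero => intro h _; omega
    | succ m ih =>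
      intro h1n h2n
      by_cases hm : m = 0
      · subst hm; exact SimpleGraph.Reachable.refl _
      · have hm1 : 1 ≤ m := by omega
        have hm24 : m ≤ 24 := by omega
        refine (ih hm1 hm24).trans (SimpleGraph.Adj.reachable ?_)
        show (edgeGraph (mapEdges hexTorusFaces)).Adj m (m + 1)
        exact ⟨by omega, hedges m (by simp only [Finset.mem_Icc]; omega)⟩
  rw [SimpleGraph.connected_iff]
  refine ⟨?_, ⟨⟨1, h1⟩⟩⟩
  rintro ⟨u, hu⟩ ⟨v, hv⟩
  have hu' : 1 ≤ u ∧ u ≤ 24 := by simpa using hu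
  have hv' : 1 ≤ v ∧ v ≤ 24 := by simpa using hv
  exact (root u hu'.1 hu'.2).symm.trans (root v hv'.1 hv'.2)

end Aux

set_option maxHeartbeats 8000000 in
/-- The given 12 hexagons on `{1, ..., 24}` form a polyhedral map with Euler
characteristic 0 (a torus) all of whose faces are hexagons, and it is centrally
symmetric under the involution `(1 13)(2 14) ... (12 24)`. -/
theorem hexagonal_torus_is_CS :
    IsPolyMapOn (Finset.Icc 1 24) hexTorusFaces ∧
    (∀ F ∈ hexTorusFaces, F.card = 6) ∧
    eulerCharMapOn (Finset.Icc 1 24) hexTorusFaces = 0 ∧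
    IsCSMapOn (Finset.Icc 1 24) hexTorusFaces hexTorusInvolution := by
  refine ⟨⟨?_, hexTorus_conn, ?_, ?_, ?_⟩, ?_, ?_, ?_⟩
  · decide
  · decide
  · decide
  · decide
  · decide
  · decide
  · refine ⟨?_, ?_, ?_, ?_, ?_, ?_⟩
    · intro v hv
      simp only [Finset.coe_Icc, Set.mem_Icc] at hv ⊢
      unfold hexTorusInvolution
      split <;> omega
    · intro v hv; simp only [Finset.mem_Icc] at hv
      unfold hexTorusInvolution; split <;> (try split) <;> omega
    · decide
    · intro v hv; simp only [Finset.mem_Icc] at hv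
      unfold hexTorusInvolution; split <;> omega
    · decide
    · decide
end
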